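/- arXiv:1412.4035 — 13 statements merged into one kernel-verified Lean document; each statement's English description precedes it below -/
import Mathlib

section
/- For all x, y in the unit ball B^n, sinh(ρ(x,y)/2) ≤ c(x,y), where ρ is the hyperbolic metric of B^n and c is the Cassinian metric of B^n. -/
open Metric Set

abbrev E (n : ℕ) := EuclideanSpace ℝ (Fin n)

/-- The Cassinian metric of a domain `D`: `c_D(x,y) = sup_{p ∈ ∂D} |x-y|/(|x-p||p-y|)`. -/
noncomputable def cassinian {n : ℕ} (D : Set (E n)) (x y : E n) : ℝ :=
  ⨆ p : frontier D, dist x y / (dist x (p : E n) * dist (p : E n) y)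

/-- The hyperbolic metric of the unit ball, characterized by
`sinh(ρ(x,y)/2) = |x-y|/√((1-|x|²)(1-|y|²))`. -/
noncomputable def rhoBall {n : ℕ} (x y : E n) : ℝ :=
  2 * Real.arsinh (dist x y / Real.sqrt ((1 - ‖x‖ ^ 2) * (1 - ‖y‖ ^ 2)))

lemma norm_of_frontier {n : ℕ} [Nontrivial (E n)] (p : frontier (ball (0 : E n) 1)) :
    ‖(p : E n)‖ = 1 := by
  obtain ⟨q, hq⟩ := p
  show ‖q‖ = 1
  rw [frontier_ball 0 one_ne_zero] at hq
  simpa using hq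

lemma bdd_cass {n : ℕ} [Nontrivial (E n)] (x y : E n) (hx : ‖x‖ < 1) (hy : ‖y‖ < 1) :
    BddAbove (Set.range fun p : frontier (ball (0 : E n) 1) =>
      dist x y / (dist x (p : E n) * dist (p : E n) y)) := by
  refine ⟨dist x y / ((1 - ‖x‖) * (1 - ‖y‖)), ?_⟩
  rintro _ ⟨p, rfl⟩
  have hp : ‖(p : E n)‖ = 1 := norm_of_frontier p
  have h1 : 1 - ‖x‖ ≤ dist x (p : E n) := by
    have := norm_sub_norm_le (p : E n) x
    rw [dist_comm, dist_eq_norm]; linarith [this, hp]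
  have h2 : 1 - ‖y‖ ≤ dist (p : E n) y := by
    have := norm_sub_norm_le (p : E n) y
    rw [dist_eq_norm]; linarith [this, hp]
  have hx' : 0 < 1 - ‖x‖ := by linarith
  have hy' : 0 < 1 - ‖y‖ := by linarith
  exact div_le_div_of_nonneg_left dist_nonneg (by positivity)
    (mul_le_mul h1 h2 hy'.le dist_nonneg)

/-- Key step: assuming `‖y‖ ≤ ‖x‖`, the boundary point `p = x/‖x‖` (or any boundary point
if `x = 0`) satisfies `|x-p||p-y| ≤ √((1-|x|²)(1-|y|²))`. -/
lemma exists_boundary_point {n : ℕ} [Nontrivial (E n)] (x y : E n)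
    (hx : ‖x‖ < 1) (hy : ‖y‖ < 1) (hyx : ‖y‖ ≤ ‖x‖) :
    ∃ p : frontier (ball (0 : E n) 1),
      dist x (p : E n) * dist (p : E n) y ≤ Real.sqrt ((1 - ‖x‖ ^ 2) * (1 - ‖y‖ ^ 2)) := by
  rcases eq_or_ne x 0 with rfl | hx0
  · have hy0 : y = 0 := by
      simpa using le_antisymm (by simpa using hyx) (norm_nonneg y)
    obtain ⟨p, hp⟩ := (NormedSpace.sphere_nonempty (E := E n) (x := 0) (r := 1)).mpr zero_le_one
    refine ⟨⟨p, by rw [frontier_ball 0 one_ne_zero]; exact hp⟩, ?_⟩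
    subst hy0
    have hp1 : ‖p‖ = 1 := by simpa using hp
    have : dist (0 : E n) p = 1 := by simp [dist_eq_norm, hp1]
    rw [this, dist_comm, this]
    simp only [norm_zero]
    rw [show ((1:ℝ) - 0 ^ 2) * (1 - 0 ^ 2) = 1 by ring, Real.sqrt_one]
    norm_num
  · set p : E n := ‖x‖⁻¹ • x with hpdef
    have hxn : (0:ℝ) < ‖x‖ := norm_pos_iff.mpr hx0
    have hp1 : ‖p‖ = 1 := by
      rw [hpdef, norm_smul, norm_inv, norm_norm, inv_mul_cancel₀ hxn.ne']
    refine ⟨⟨p, by rw [frontier_ball 0 one_ne_zero]; simpa using hp1⟩, ?_⟩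
    have hinv : ‖x‖ * ‖x‖⁻¹ = 1 := mul_inv_cancel₀ hxn.ne'
    have hd1 : dist x p = 1 - ‖x‖ := by
      have hsub : x - ‖x‖⁻¹ • x = (1 - ‖x‖⁻¹) • x := by
        rw [sub_smul, one_smul]
      rw [dist_eq_norm, hpdef, hsub, norm_smul, Real.norm_eq_abs,
        abs_of_nonpos (by nlinarith)]
      rw [neg_sub, sub_mul, inv_mul_cancel₀ hxn.ne', one_mul]
    have hd2 : dist p y ≤ 1 + ‖y‖ := by
      calc dist p y ≤ ‖p‖ + ‖y‖ := dist_le_norm_add_norm p y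
      _ = 1 + ‖y‖ := by rw [hp1]
    have hle : dist x p * dist p y ≤ (1 - ‖x‖) * (1 + ‖y‖) := by
      rw [hd1]
      exact mul_le_mul_of_nonneg_left hd2 (by linarith)
    refine hle.trans ?_
    have hA : (0:ℝ) ≤ 1 - ‖x‖ := by linarith
    have hB : (0:ℝ) ≤ 1 + ‖y‖ := by positivity
    have hC : (0:ℝ) ≤ ‖x‖ - ‖y‖ := by linarith
    rw [Real.le_sqrt (by positivity)]
    swap
    · have h1 : (0:ℝ) ≤ 1 - ‖x‖ ^ 2 := by nlinarith [norm_nonneg x]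
      have h2 : (0:ℝ) ≤ 1 - ‖y‖ ^ 2 := by nlinarith [norm_nonneg y]
      exact mul_nonneg h1 h2
    nlinarith [mul_nonneg (mul_nonneg hA hB) hC]

lemma main_key {n : ℕ} [Nontrivial (E n)] (x y : E n)
    (hx : ‖x‖ < 1) (hy : ‖y‖ < 1) (hyx : ‖y‖ ≤ ‖x‖) :
    dist x y / Real.sqrt ((1 - ‖x‖ ^ 2) * (1 - ‖y‖ ^ 2))
      ≤ cassinian (ball (0 : E n) 1) x y := by
  obtain ⟨p, hp⟩ := exists_boundary_point x y hx hy hyx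
  have hp1 : ‖(p : E n)‖ = 1 := norm_of_frontier p
  have hdx : 0 < dist x (p : E n) := by
    rw [dist_pos]; intro h; rw [h] at hx; rw [hp1] at hx; linarith
  have hdy : 0 < dist (p : E n) y := by
    rw [dist_pos]; intro h; rw [← h] at hy; rw [hp1] at hy; linarith
  have hprod : 0 < dist x (p : E n) * dist (p : E n) y := mul_pos hdx hdy
  calc dist x y / Real.sqrt ((1 - ‖x‖ ^ 2) * (1 - ‖y‖ ^ 2))
      ≤ dist x y / (dist x (p : E n) * dist (p : E n) y) :=
        div_le_div_of_nonneg_left dist_nonneg hprod hp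
    _ ≤ cassinian (ball (0 : E n) 1) x y := le_ciSup (bdd_cass x y hx hy) p

lemma cassinian_comm {n : ℕ} (D : Set (E n)) (x y : E n) :
    cassinian D x y = cassinian D y x := by
  unfold cassinian
  congr 1
  ext p
  rw [dist_comm x y, dist_comm x (p : E n), dist_comm (p : E n) y, mul_comm]

theorem sinh_rho_le_cassinian (n : ℕ) (hn : 2 ≤ n) (x y : E n)
    (hx : x ∈ ball (0 : E n) 1) (hy : y ∈ ball (0 : E n) 1) :
    Real.sinh (rhoBall x y / 2) ≤ cassinian (ball (0 : E n) 1) x y := by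
  haveI : Nonempty (Fin n) := ⟨⟨0, by omega⟩⟩
  haveI : Nontrivial (E n) := inferInstance
  rw [mem_ball, dist_zero_right] at hx hy
  have h : Real.sinh (rhoBall x y / 2)
      = dist x y / Real.sqrt ((1 - ‖x‖ ^ 2) * (1 - ‖y‖ ^ 2)) := by
    rw [rhoBall, mul_div_cancel_left₀ _ (two_ne_zero), Real.sinh_arsinh]
  rw [h]
  rcases le_total ‖y‖ ‖x‖ with hle | hle
  · exact main_key x y hx hy hle
  · rw [cassinian_comm, dist_comm, mul_comm]
    exact main_key y x hy hx hle
end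

section
/- For all x, y in the unit ball B^n, ρ(x,y) ≤ 2·c(x,y), where ρ is the hyperbolic metric and c the Cassinian metric of B^n. -/
open Metric Set

lemma arsinh_le_self {t : ℝ} (ht : 0 ≤ t) : Real.arsinh t ≤ t := by
  rw [← Real.sinh_le_sinh, Real.sinh_arsinh]
  rcases eq_or_lt_of_le ht with h | h
  · simp [← h]
  · exact (Real.self_lt_sinh_iff.mpr h).le

lemma key {n : ℕ} (x y : E n) (hx : ‖x‖ < 1) (hy : ‖y‖ < 1) (hle : ‖y‖ ≤ ‖x‖) :
    dist x y / Real.sqrt ((1 - ‖x‖ ^ 2) * (1 - ‖y‖ ^ 2)) ≤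
      cassinian (ball (0 : E n) 1) x y := by
  have hcnn : 0 ≤ cassinian (ball (0 : E n) 1) x y :=
    Real.iSup_nonneg fun p => div_nonneg dist_nonneg (mul_nonneg dist_nonneg dist_nonneg)
  rcases eq_or_ne x 0 with rfl | hx0
  · have hy0 : y = 0 := by
      have : ‖y‖ ≤ 0 := by simpa using hle
      simpa [norm_le_zero_iff] using this
    subst hy0
    simpa using hcnn
  have hxn : 0 < ‖x‖ := norm_pos_iff.mpr hx0
  set p : E n := ‖x‖⁻¹ • x with hp_def
  have hpn : ‖p‖ = 1 := by
    rw [hp_def, norm_smul, Real.norm_eq_abs, abs_of_nonneg (by positivity)]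
    exact inv_mul_cancel₀ hxn.ne'
  have hp : p ∈ frontier (ball (0 : E n) 1) := by
    rw [frontier_ball (0 : E n) one_ne_zero]
    simpa [mem_sphere_zero_iff_norm] using hpn
  have hdxp : dist x p = 1 - ‖x‖ := by
    rw [dist_eq_norm]
    have hxp : x - p = (1 - ‖x‖⁻¹) • x := by
      rw [sub_smul, one_smul, hp_def]
    rw [hxp, norm_smul, Real.norm_eq_abs,
      abs_of_nonpos (by simp [one_le_inv_iff₀, hxn, hx.le]), neg_sub, sub_mul,
      inv_mul_cancel₀ hxn.ne', one_mul]
  have hdpy : dist p y ≤ 1 + ‖y‖ := by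
    calc dist p y = ‖p - y‖ := dist_eq_norm p y
      _ ≤ ‖p‖ + ‖y‖ := norm_sub_le p y
      _ = 1 + ‖y‖ := by rw [hpn]
  have hdxp_pos : 0 < dist x p := by rw [hdxp]; linarith
  have hdpy_pos : 0 < dist p y := by
    rw [dist_pos]
    intro h
    rw [h] at hpn
    linarith
  -- the key bound
  have hsq : (dist x p * dist p y) ^ 2 ≤ (1 - ‖x‖ ^ 2) * (1 - ‖y‖ ^ 2) := by
    have h1 : dist x p * dist p y ≤ (1 - ‖x‖) * (1 + ‖y‖) := by
      rw [hdxp]; gcongr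
    have h2 : ((1 - ‖x‖) * (1 + ‖y‖)) ^ 2 ≤ (1 - ‖x‖ ^ 2) * (1 - ‖y‖ ^ 2) := by
      nlinarith [mul_nonneg (mul_nonneg (sub_nonneg.mpr hx.le)
        (by linarith [norm_nonneg y] : (0:ℝ) ≤ 1 + ‖y‖)) (sub_nonneg.mpr hle)]
    calc (dist x p * dist p y) ^ 2 ≤ ((1 - ‖x‖) * (1 + ‖y‖)) ^ 2 := by
          have : 0 ≤ dist x p * dist p y := mul_nonneg hdxp_pos.le hdpy_pos.le
          exact pow_le_pow_left₀ this h1 2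
      _ ≤ _ := h2
  have hle_sqrt : dist x p * dist p y ≤ Real.sqrt ((1 - ‖x‖ ^ 2) * (1 - ‖y‖ ^ 2)) :=
    Real.le_sqrt_of_sq_le hsq
  have hbdd : BddAbove (Set.range fun q : frontier (ball (0 : E n) 1) =>
      dist x y / (dist x (q : E n) * dist (q : E n) y)) := by
    refine ⟨dist x y / ((1 - ‖x‖) * (1 - ‖y‖)), ?_⟩
    rintro _ ⟨q, rfl⟩
    have hq : ‖(q : E n)‖ = 1 := by
      have hqm : (q : E n) ∈ sphere (0 : E n) 1 := by
        rw [← frontier_ball (0 : E n) one_ne_zero]; exact q.2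
      exact mem_sphere_zero_iff_norm.mp hqm
    have h1 : 1 - ‖x‖ ≤ dist x (q : E n) := by
      calc 1 - ‖x‖ = ‖(q : E n)‖ - ‖x‖ := by rw [hq]
        _ ≤ ‖(q : E n) - x‖ := norm_sub_norm_le _ _
        _ = dist x (q : E n) := by rw [dist_eq_norm, norm_sub_rev]
    have h2 : 1 - ‖y‖ ≤ dist (q : E n) y := by
      calc 1 - ‖y‖ = ‖(q : E n)‖ - ‖y‖ := by rw [hq]
        _ ≤ ‖(q : E n) - y‖ := norm_sub_norm_le _ _
        _ = dist (q : E n) y := (dist_eq_norm _ _).symm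
    exact div_le_div_of_nonneg_left dist_nonneg
      (mul_pos (by linarith) (by linarith))
      (mul_le_mul h1 h2 (by linarith) dist_nonneg)
  have hstep : dist x y / (dist x p * dist p y) ≤ cassinian (ball (0 : E n) 1) x y :=
    le_ciSup hbdd (⟨p, hp⟩ : frontier (ball (0 : E n) 1))
  exact le_trans (div_le_div_of_nonneg_left dist_nonneg
    (mul_pos hdxp_pos hdpy_pos) hle_sqrt) hstep

theorem rho_le_two_cassinian (n : ℕ) (hn : 2 ≤ n) (x y : E n)
    (hx : x ∈ ball (0 : E n) 1) (hy : y ∈ ball (0 : E n) 1) :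
    rhoBall x y ≤ 2 * cassinian (ball (0 : E n) 1) x y := by
  rw [mem_ball, dist_zero_right] at hx hy
  have hD : 0 ≤ dist x y / Real.sqrt ((1 - ‖x‖ ^ 2) * (1 - ‖y‖ ^ 2)) :=
    div_nonneg dist_nonneg (Real.sqrt_nonneg _)
  have hkey : dist x y / Real.sqrt ((1 - ‖x‖ ^ 2) * (1 - ‖y‖ ^ 2)) ≤
      cassinian (ball (0 : E n) 1) x y := by
    rcases le_total ‖y‖ ‖x‖ with h | h
    · exact key x y hx hy h
    · have := key y x hy hx h
      rwa [dist_comm y x, mul_comm (1 - ‖y‖ ^ 2), cassinian_comm] at this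
  rw [rhoBall]
  have := arsinh_le_self hD
  linarith
end

section
/- For any proper subdomain D of R^n and x, y ∈ D, j_D(x,y) ≤ (|x-y| + min(δ_D(x), δ_D(y))) · c_D(x,y). -/
open Metric Set

/-- The distance ratio metric of a domain . -/
noncomputable def jdist {n : ℕ} (D : Set (E n)) (x y : E n) : ℝ :=
  Real.log (1 + dist x y / min (infDist x (frontier D)) (infDist y (frontier D)))

theorem jdist_le_cassinian (n : ℕ) (hn : 2 ≤ n) (D : Set (E n)) (hD : IsOpen D)
    (hDc : IsConnected D) (hDp : D ≠ univ) (x y : E n) (hx : x ∈ D) (hy : y ∈ D) :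
    jdist D x y ≤
      (dist x y + min (infDist x (frontier D)) (infDist y (frontier D))) * cassinian D x y := by
  set K := frontier D with hKdef
  have hKc : IsClosed K := isClosed_frontier
  have hKne : K.Nonempty := nonempty_frontier_iff.mpr ⟨hDc.nonempty, hDp⟩
  have hxK : x ∉ K := by rw [hKdef, hD.frontier_eq]; exact fun h => h.2 hx
  have hyK : y ∉ K := by rw [hKdef, hD.frontier_eq]; exact fun h => h.2 hy
  have hδx : 0 < infDist x K := (hKc.notMem_iff_infDist_pos hKne).1 hxK
  have hδy : 0 < infDist y K := (hKc.notMem_iff_infDist_pos hKne).1 hyK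
  set m := min (infDist x K) (infDist y K) with hm
  have hm0 : 0 < m := lt_min hδx hδy
  set d := dist x y with hd
  have hd0 : 0 ≤ d := dist_nonneg
  -- boundedness of the family
  have hbdd : BddAbove (Set.range fun p : K => d / (dist x (p : E n) * dist (p : E n) y)) := by
    refine ⟨d / (infDist x K * infDist y K), ?_⟩
    rintro r ⟨p, rfl⟩
    have h1 : infDist x K ≤ dist x (p : E n) := infDist_le_dist_of_mem p.2
    have h2 : infDist y K ≤ dist (p : E n) y := by
      rw [dist_comm]; exact infDist_le_dist_of_mem p.2
    exact div_le_div_of_nonneg_left hd0 (mul_pos hδx hδy)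
      (mul_le_mul h1 h2 hδy.le dist_nonneg)
  have key : ∀ p ∈ K, d / (dist x p * dist p y) ≤ cassinian D x y := fun p hp =>
    le_ciSup hbdd (⟨p, hp⟩ : K)
  -- main step: cassinian ≥ d / (m * (d + m))
  have hc : d / (m * (d + m)) ≤ cassinian D x y := by
    rcases min_cases (infDist x K) (infDist y K) with ⟨he, _⟩ | ⟨he, _⟩
    · obtain ⟨p, hpK, hpd⟩ := hKc.exists_infDist_eq_dist hKne x
      refine le_trans ?_ (key p hpK)
      have h1 : dist x p = m := by rw [hm, he, hpd]
      have h2 : dist p y ≤ d + m := by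
        calc dist p y ≤ dist p x + dist x y := dist_triangle _ _ _
        _ = d + m := by rw [dist_comm p x, h1, add_comm]
      have h3 : 0 < dist p y := lt_of_lt_of_le hδy (by rw [dist_comm]; exact infDist_le_dist_of_mem hpK)
      refine div_le_div_of_nonneg_left hd0 (mul_pos (h1 ▸ hm0) h3) ?_
      rw [h1]; exact mul_le_mul_of_nonneg_left h2 hm0.le
    · obtain ⟨p, hpK, hpd⟩ := hKc.exists_infDist_eq_dist hKne y
      refine le_trans ?_ (key p hpK)
      have h1 : dist p y = m := by rw [hm, he, hpd, dist_comm]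
      have h2 : dist x p ≤ d + m := by
        calc dist x p ≤ dist x y + dist y p := dist_triangle _ _ _
        _ = d + m := by rw [dist_comm y p, h1]
      calc d / (m * (d + m)) = d / ((d + m) * m) := by rw [mul_comm]
      _ ≤ d / (dist x p * dist p y) := by
          have h3 : 0 < dist x p := lt_of_lt_of_le hδx (infDist_le_dist_of_mem hpK)
          refine div_le_div_of_nonneg_left hd0 (mul_pos h3 (h1 ▸ hm0)) ?_
          rw [h1]; exact mul_le_mul_of_nonneg_right h2 hm0.le
  have hlog : jdist D x y ≤ d / m := by
    rw [jdist]
    have h1 : (0:ℝ) < 1 + d / m := by positivity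
    calc Real.log (1 + d / m) ≤ (1 + d / m) - 1 := Real.log_le_sub_one_of_pos h1
    _ = d / m := by ring
  refine hlog.trans ?_
  calc d / m = (d + m) * (d / (m * (d + m))) := by
        field_simp
  _ ≤ (d + m) * cassinian D x y := mul_le_mul_of_nonneg_left hc (by linarith)
end

section
/- For all x, y in the unit ball B^n with max(|x|,|y|) ≤ λ < 1, c(x,y) ≤ j(x,y)/(1-λ)², where c is the Cassinian metric and j the distance ratio metric of B^n. -/
open Metric Set

/-- The distance ratio metric of the unit ball. -/
noncomputable def jBall {n : ℕ} (x y : E n) : ℝ :=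
  Real.log (1 + dist x y / min (1 - ‖x‖) (1 - ‖y‖))

lemma aux_hasDerivAt (s : ℝ) (hs : 0 ≤ s) :
    HasDerivAt (fun u : ℝ => Real.log (1 + u) - 2 * u / (2 + u))
      (1 / (1 + s) - 4 / (2 + s) ^ 2) s := by
  have h1 : (1 : ℝ) + s ≠ 0 := by positivity
  have h2 : (2 : ℝ) + s ≠ 0 := by positivity
  have hlog : HasDerivAt (fun u : ℝ => Real.log (1 + u)) (1 / (1 + s)) s := by
    have := ((hasDerivAt_id s).const_add 1).log h1
    simpa using this
  have hdiv : HasDerivAt (fun u : ℝ => 2 * u / (2 + u))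
      ((2 * 1 * (2 + s) - 2 * s * 1) / (2 + s) ^ 2) s :=
    ((hasDerivAt_id s).const_mul 2).div ((hasDerivAt_id s).const_add 2) h2
  have : (2 * 1 * (2 + s) - 2 * s * 1) / (2 + s) ^ 2 = 4 / (2 + s) ^ 2 := by ring
  rw [this] at hdiv
  exact hlog.sub hdiv

lemma log_ge_aux (t : ℝ) (ht : 0 ≤ t) : 2 * t / (2 + t) ≤ Real.log (1 + t) := by
  set f : ℝ → ℝ := fun u => Real.log (1 + u) - 2 * u / (2 + u) with hf
  have hmono : MonotoneOn f (Ici 0) := by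
    apply monotoneOn_of_deriv_nonneg (convex_Ici 0)
    · intro s hs
      exact (aux_hasDerivAt s hs).continuousAt.continuousWithinAt
    · intro s hs
      rw [interior_Ici] at hs
      exact (aux_hasDerivAt s (le_of_lt hs)).differentiableAt.differentiableWithinAt
    · intro s hs
      rw [interior_Ici] at hs
      have hs' : (0 : ℝ) ≤ s := le_of_lt hs
      rw [(aux_hasDerivAt s hs').deriv]
      have h1 : (0 : ℝ) < 1 + s := by linarith
      have h2 : (0 : ℝ) < 2 + s := by linarith
      rw [sub_nonneg, div_le_div_iff₀ (by positivity) h1]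
      nlinarith [sq_nonneg s]
  have h0 : f 0 ≤ f t := hmono (le_refl (0 : ℝ)) ht ht
  have : f 0 = 0 := by simp [hf]
  rw [this] at h0
  simpa [hf, sub_nonneg] using h0

theorem cassinian_le_jBall (n : ℕ) (hn : 2 ≤ n) (lam : ℝ) (hlam : lam < 1) (x y : E n)
    (hx : x ∈ ball (0 : E n) 1) (hy : y ∈ ball (0 : E n) 1)
    (hxy : max ‖x‖ ‖y‖ ≤ lam) :
    cassinian (ball (0 : E n) 1) x y ≤ jBall x y / (1 - lam) ^ 2 := by
  have hx' : ‖x‖ ≤ lam := le_trans (le_max_left _ _) hxy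
  have hy' : ‖y‖ ≤ lam := le_trans (le_max_right _ _) hxy
  have hlam0 : 0 ≤ lam := le_trans (norm_nonneg x) hx'
  set m : ℝ := min (1 - ‖x‖) (1 - ‖y‖) with hm
  have hml : 1 - lam ≤ m := le_min (by linarith) (by linarith)
  have hm0 : 0 < m := lt_of_lt_of_le (by linarith) hml
  set d : ℝ := dist x y with hd
  have hd0 : 0 ≤ d := dist_nonneg
  have hdlam : d ≤ 2 * lam := by
    have : d ≤ ‖x‖ + ‖y‖ := by rw [hd, dist_eq_norm]; exact norm_sub_le x y
    linarith
  have hdm0 : 0 ≤ d / m := by positivity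
  have hjnn : 0 ≤ jBall x y := by
    rw [jBall]
    apply Real.log_nonneg
    linarith
  have hlt : 0 < 1 - lam := by linarith
  -- key inequality : (1-lam) * (d/m) ≤ log (1 + d/m)
  have hkey : (1 - lam) * (d / m) ≤ Real.log (1 + d / m) := by
    set t : ℝ := d / m with htdef
    have htlam : t * (1 - lam) ≤ 2 * lam := by
      rw [htdef, div_mul_eq_mul_div, div_le_iff₀ hm0]
      nlinarith
    have h1 : (1 - lam) * t ≤ 2 * t / (2 + t) := by
      rw [le_div_iff₀ (by linarith : (0:ℝ) < 2 + t)]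
      nlinarith
    exact le_trans h1 (log_ge_aux t hdm0)
  rw [cassinian]
  apply Real.iSup_le _ (by positivity)
  rintro ⟨p, hp⟩
  have hfr : frontier (ball (0 : E n) 1) = sphere (0 : E n) 1 :=
    frontier_ball (0 : E n) one_ne_zero
  rw [hfr] at hp
  have hpn : ‖p‖ = 1 := by simpa using hp
  have hxp : 1 - ‖x‖ ≤ dist x p := by
    have := norm_sub_norm_le p x
    rw [← dist_eq_norm, dist_comm] at this
    linarith
  have hpy : 1 - ‖y‖ ≤ dist p y := by
    have := norm_sub_norm_le p y
    rw [← dist_eq_norm] at this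
    linarith
  have hxp0 : 0 < dist x p := lt_of_lt_of_le (by linarith) hxp
  have hpy0 : 0 < dist p y := lt_of_lt_of_le (by linarith) hpy
  have hprod : m * (1 - lam) ≤ dist x p * dist p y := by
    calc m * (1 - lam) ≤ (1 - ‖x‖) * (1 - ‖y‖) :=
          mul_le_mul (min_le_left _ _) (by linarith) (le_of_lt hlt) (by linarith)
      _ ≤ dist x p * dist p y :=
          mul_le_mul hxp hpy (by linarith) (le_of_lt hxp0)
  have hstep1 : d / (dist x p * dist p y) ≤ d / (m * (1 - lam)) :=
    div_le_div_of_nonneg_left hd0 (by positivity) hprod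
  have hstep2 : d / (m * (1 - lam)) ≤ jBall x y / (1 - lam) ^ 2 := by
    rw [jBall, ← hd, ← hm, div_le_div_iff₀ (by positivity) (by positivity)]
    have hdm : d / m * m = d := div_mul_cancel₀ d (ne_of_gt hm0)
    have h2 := mul_le_mul_of_nonneg_right hkey (le_of_lt (mul_pos hm0 hlt))
    nlinarith [h2, hdm]
  exact le_trans hstep1 hstep2
end

section
/- For any proper subdomain D ⊊ R^n and x, y ∈ D, p_D(x,y) ≤ √2 · min(δ_D(x), δ_D(y)) · c_D(x,y), where p_D(x,y) = |x-y|/√(|x-y|² + 4δ_D(x)δ_D(y)) and c_D is the Cassinian metric. -/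
open Metric Set

/-- The quantity p_D. -/
noncomputable def pdist {n : ℕ} (D : Set (E n)) (x y : E n) : ℝ :=
  dist x y / Real.sqrt (dist x y ^ 2 + 4 * infDist x (frontier D) * infDist y (frontier D))

lemma pdist_comm {n : ℕ} (D : Set (E n)) (x y : E n) :
    pdist D x y = pdist D y x := by
  unfold pdist
  rw [dist_comm x y]
  ring_nf

theorem pdist_le_cassinian (n : ℕ) (hn : 2 ≤ n) (D : Set (E n)) (hD : IsOpen D)
    (hDc : IsConnected D) (hDp : D ≠ univ) (x y : E n) (hx : x ∈ D) (hy : y ∈ D) :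
    pdist D x y ≤
      Real.sqrt 2 * min (infDist x (frontier D)) (infDist y (frontier D)) * cassinian D x y := by
  wlog hab : infDist x (frontier D) ≤ infDist y (frontier D) generalizing x y
  · rw [pdist_comm, cassinian_comm, min_comm]
    exact this y x hy hx (le_of_not_ge hab)
  have hFne : (frontier D).Nonempty :=
    nonempty_frontier_iff.mpr ⟨⟨x, hx⟩, hDp⟩
  have hFc : IsClosed (frontier D) := isClosed_frontier
  set F := frontier D with hF
  set a := infDist x F with ha
  set b := infDist y F with hb
  have hxF : x ∉ F := by
    rw [hF, hD.frontier_eq]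
    exact fun h => h.2 hx
  have hyF : y ∉ F := by
    rw [hF, hD.frontier_eq]
    exact fun h => h.2 hy
  have ha0 : 0 < a := (hFc.notMem_iff_infDist_pos hFne).mp hxF
  have hb0 : 0 < b := (hFc.notMem_iff_infDist_pos hFne).mp hyF
  obtain ⟨p, hpF, hpd⟩ := hFc.exists_infDist_eq_dist hFne x
  set r := dist x y with hr
  have hr0 : 0 ≤ r := dist_nonneg
  have hbdd : BddAbove (Set.range fun q : F => r / (dist x (q : E n) * dist (q : E n) y)) := by
    refine ⟨r / (a * b), ?_⟩
    rintro z ⟨q, rfl⟩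
    have h1 : a ≤ dist x (q : E n) := infDist_le_dist_of_mem q.2
    have h2 : b ≤ dist (q : E n) y := by
      rw [dist_comm]; exact infDist_le_dist_of_mem q.2
    have hle : a * b ≤ dist x (q : E n) * dist (q : E n) y :=
      mul_le_mul h1 h2 hb0.le (le_trans ha0.le h1)
    exact div_le_div_of_nonneg_left hr0 (mul_pos ha0 hb0) hle
  have hterm : r / (dist x p * dist p y) ≤ cassinian D x y :=
    le_ciSup hbdd (⟨p, hpF⟩ : F)
  have hpy0 : 0 < dist p y :=
    lt_of_lt_of_le hb0 (by rw [dist_comm]; exact infDist_le_dist_of_mem hpF)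
  have hxp : dist x p = a := hpd.symm
  have hpy : dist p y ≤ a + r := by
    calc dist p y ≤ dist p x + dist x y := dist_triangle p x y
    _ = a + r := by rw [dist_comm p x, hxp]
  have hterm0 : 0 ≤ r / (dist x p * dist p y) :=
    div_nonneg hr0 (mul_nonneg dist_nonneg dist_nonneg)
  have hc0 : 0 ≤ cassinian D x y := le_trans hterm0 hterm
  have hmin : min a b = a := min_eq_left hab
  rw [hmin]
  have hpd_eq : pdist D x y = r / Real.sqrt (r ^ 2 + 4 * a * b) := by
    rw [pdist]
  rcases eq_or_lt_of_le hr0 with hr0' | hr0'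
  · rw [hpd_eq, ← hr0', zero_div]
    positivity
  have hsq : 0 < Real.sqrt (r ^ 2 + 4 * a * b) := by positivity
  have key : a + r ≤ Real.sqrt 2 * Real.sqrt (r ^ 2 + 4 * a * b) := by
    rw [← Real.sqrt_mul (by norm_num : (0:ℝ) ≤ 2)]
    refine Real.le_sqrt_of_sq_le ?_
    nlinarith [sq_nonneg (r - a), mul_le_mul_of_nonneg_left hab ha0.le]
  have h1 : pdist D x y ≤ Real.sqrt 2 * r / (a + r) := by
    rw [hpd_eq, div_le_div_iff₀ hsq (by positivity)]
    nlinarith [mul_le_mul_of_nonneg_left key hr0]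
  have h2 : Real.sqrt 2 * r / (a + r) = Real.sqrt 2 * a * (r / (a * (a + r))) := by
    field_simp
  have h3 : r / (a * (a + r)) ≤ r / (dist x p * dist p y) := by
    rw [hxp]
    exact div_le_div_of_nonneg_left hr0 (mul_pos ha0 hpy0)
      (mul_le_mul_of_nonneg_left hpy ha0.le)
  calc pdist D x y ≤ Real.sqrt 2 * r / (a + r) := h1
    _ = Real.sqrt 2 * a * (r / (a * (a + r))) := h2
    _ ≤ Real.sqrt 2 * a * (r / (dist x p * dist p y)) :=
        mul_le_mul_of_nonneg_left h3 (by positivity)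
    _ ≤ Real.sqrt 2 * a * cassinian D x y :=
        mul_le_mul_of_nonneg_left hterm (by positivity)
end

section
/- Let φ be a Möbius transformation with φ(B^n) = B^n and a = φ(0). Then for all x, y ∈ B^n, ((1-|a|)/(1+|a|))·c(x,y) ≤ c(φ(x), φ(y)) ≤ ((1+|a|)/(1-|a|))·c(x,y), where c is the Cassinian metric of B^n. -/
open Metric Set

/-- A Moebius transformation of the unit ball: either an orthogonal map, or the
composition of an orthogonal map followed by the inversion in the sphere
S(a*, r) orthogonal to the unit sphere, where a* = a/|a|^2 and r = sqrt(1-|a|^2)/|a|. -/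
def IsMobiusOfBall {n : ℕ} (f : E n → E n) : Prop :=
  ∃ T : E n ≃ₗᵢ[ℝ] E n,
    (∀ x, f x = T x) ∨
      ∃ a : E n, a ≠ 0 ∧ ‖a‖ < 1 ∧ ∀ x, f x =
        EuclideanGeometry.inversion ((‖a‖ ^ 2)⁻¹ • a) (Real.sqrt (1 - ‖a‖ ^ 2) / ‖a‖) (T x)

namespace CassinianAux

open EuclideanGeometry

variable {n : ℕ}

noncomputable def t (x y p : E n) : ℝ := dist x y / (dist x p * dist p y)

lemma t_nonneg (x y p : E n) : 0 ≤ t x y p := by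
  unfold t; positivity

lemma dist_ge {x p : E n} (hp : ‖p‖ = 1) : 1 - ‖x‖ ≤ dist x p := by
  have h := norm_sub_norm_le p x
  rw [hp] at h
  calc 1 - ‖x‖ ≤ ‖p - x‖ := h
    _ = dist x p := by rw [dist_eq_norm, norm_sub_rev]

lemma dist_pos_of_ball {x p : E n} (hx : ‖x‖ < 1) (hp : ‖p‖ = 1) : 0 < dist x p :=
  lt_of_lt_of_le (by linarith) (dist_ge hp)

lemma t_le {x y : E n} (hx : ‖x‖ < 1) (hy : ‖y‖ < 1) {p : E n} (hp : ‖p‖ = 1) :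
    t x y p ≤ dist x y / ((1 - ‖x‖) * (1 - ‖y‖)) := by
  have hxp := dist_ge (x := x) hp
  have hyp : 1 - ‖y‖ ≤ dist p y := by rw [dist_comm]; exact dist_ge hp
  have hx1 : 0 < 1 - ‖x‖ := by linarith
  have hy1 : 0 < 1 - ‖y‖ := by linarith
  exact div_le_div_of_nonneg_left dist_nonneg (mul_pos hx1 hy1)
    (mul_le_mul hxp hyp hy1.le dist_nonneg)

lemma cassinian_eq (x y : E n) :
    cassinian (ball (0 : E n) 1) x y = ⨆ p : sphere (0 : E n) 1, t x y p := by
  unfold cassinian t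
  rw [frontier_ball (0 : E n) one_ne_zero]

lemma ciSup_bounds {ι : Type*} [Nonempty ι] (tt w : ι → ℝ) (σ : Equiv.Perm ι)
    (ht0 : ∀ i, 0 ≤ tt i) (B : ℝ) (htB : ∀ i, tt i ≤ B)
    {L U : ℝ} (hL : 0 ≤ L) (hwL : ∀ i, L ≤ w i) (hwU : ∀ i, w i ≤ U) :
    L * (⨆ i, tt i) ≤ (⨆ i, w i * tt (σ i)) ∧
      (⨆ i, w i * tt (σ i)) ≤ U * (⨆ i, tt i) := by
  have hU : 0 ≤ U := hL.trans ((hwL (Classical.arbitrary ι)).trans (hwU _))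
  have hbt : BddAbove (Set.range tt) := ⟨B, by rintro _ ⟨i, rfl⟩; exact htB i⟩
  have hsup_le : ∀ i, tt i ≤ ⨆ j, tt j := fun i => le_ciSup hbt i
  have hterm : ∀ i, w i * tt (σ i) ≤ U * (⨆ j, tt j) := fun i =>
    mul_le_mul (hwU i) (hsup_le _) (ht0 _) hU
  constructor
  · rw [Real.mul_iSup_of_nonneg hL]
    refine ciSup_le fun i => ?_
    calc L * tt i = L * tt (σ (σ.symm i)) := by rw [Equiv.apply_symm_apply]
      _ ≤ w (σ.symm i) * tt (σ (σ.symm i)) := mul_le_mul_of_nonneg_right (hwL _) (ht0 _)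
      _ ≤ ⨆ j, w j * tt (σ j) :=
        le_ciSup (f := fun j => w j * tt (σ j))
          ⟨U * (⨆ j, tt j), by rintro _ ⟨i, rfl⟩; exact hterm i⟩ _
  · exact ciSup_le hterm

end CassinianAux

open CassinianAux EuclideanGeometry

theorem cassinian_mobius_distortion (n : ℕ) (hn : 2 ≤ n) (f : E n → E n)
    (hf : IsMobiusOfBall f) (hfb : f '' ball (0 : E n) 1 = ball (0 : E n) 1)
    (x y : E n) (hx : x ∈ ball (0 : E n) 1) (hy : y ∈ ball (0 : E n) 1) :
    (1 - ‖f 0‖) / (1 + ‖f 0‖) * cassinian (ball (0 : E n) 1) x y ≤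
        cassinian (ball (0 : E n) 1) (f x) (f y) ∧
      cassinian (ball (0 : E n) 1) (f x) (f y) ≤
        (1 + ‖f 0‖) / (1 - ‖f 0‖) * cassinian (ball (0 : E n) 1) x y := by
  rw [mem_ball, dist_zero_right] at hx hy
  haveI : Nonempty (sphere (0 : E n) 1) := by
    refine ⟨⟨EuclideanSpace.single ⟨0, by omega⟩ (1 : ℝ), ?_⟩⟩
    rw [mem_sphere_zero_iff_norm, EuclideanSpace.norm_single, norm_one]
  rw [cassinian_eq, cassinian_eq]
  obtain ⟨T, hT | ⟨a, ha0, ha1, hfa⟩⟩ := hf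
  · -- orthogonal case
    have hf0 : f 0 = 0 := by rw [hT 0, map_zero]
    rw [hf0, norm_zero]
    set σ : Equiv.Perm (sphere (0 : E n) 1) :=
      { toFun := fun p => ⟨T.symm p, by
          rw [mem_sphere_zero_iff_norm, T.symm.norm_map]
          exact mem_sphere_zero_iff_norm.mp p.2⟩
        invFun := fun p => ⟨T p, by
          rw [mem_sphere_zero_iff_norm, T.norm_map]
          exact mem_sphere_zero_iff_norm.mp p.2⟩
        left_inv := fun p => Subtype.ext (T.apply_symm_apply p)
        right_inv := fun p => Subtype.ext (T.symm_apply_apply p) } with hσ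
    have hterm : ∀ p : sphere (0 : E n) 1,
        t (f x) (f y) p = (1 : ℝ) * t x y (σ p) := by
      intro p
      have hσp : ((σ p : sphere (0 : E n) 1) : E n) = T.symm (p : E n) := rfl
      have h1 : dist (f x) (f y) = dist x y := by rw [hT x, hT y, T.dist_map]
      have h2 : dist (f x) (p : E n) = dist x (T.symm (p : E n)) := by
        rw [hT x, ← T.apply_symm_apply (p : E n), T.dist_map, T.apply_symm_apply]
      have h3 : dist (p : E n) (f y) = dist (T.symm (p : E n)) y := by
        rw [hT y, ← T.apply_symm_apply (p : E n), T.dist_map, T.apply_symm_apply]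
      unfold t
      rw [h1, h2, h3, hσp, one_mul]
    rw [iSup_congr hterm]
    exact ciSup_bounds (fun p : sphere (0 : E n) 1 => t x y p)
      (fun _ => (1 : ℝ)) σ (fun p => t_nonneg x y p)
      (dist x y / ((1 - ‖x‖) * (1 - ‖y‖)))
      (fun p => t_le hx hy (mem_sphere_zero_iff_norm.mp p.2))
      (L := (1 - (0:ℝ)) / (1 + 0)) (U := (1 + (0:ℝ)) / (1 - 0)) (by norm_num)
      (fun _ => by norm_num) (fun _ => by norm_num)
  · -- inversion case
    set s := ‖a‖ with hs_def
    have hs0 : 0 < s := norm_pos_iff.mpr ha0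
    have hs0' : s ≠ 0 := ne_of_gt hs0
    have h1s : 0 < 1 - s ^ 2 := by nlinarith
    set c : E n := (s ^ 2)⁻¹ • a with hc_def
    set r : ℝ := Real.sqrt (1 - s ^ 2) / s with hr_def
    have hr_pos : 0 < r := div_pos (Real.sqrt_pos.2 h1s) hs0
    have hr0 : r ≠ 0 := ne_of_gt hr_pos
    have hr2 : r ^ 2 = (1 - s ^ 2) / s ^ 2 := by
      rw [hr_def, div_pow, Real.sq_sqrt h1s.le]
    have hcn : ‖c‖ = s⁻¹ := by
      rw [hc_def, norm_smul, norm_inv, norm_pow, norm_norm, ← hs_def, pow_two, mul_inv]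
      field_simp
    have hc1 : 1 < ‖c‖ := by
      rw [hcn]
      exact (one_lt_inv₀ hs0).2 ha1
    have hne_c : ∀ z : E n, ‖z‖ < 1 → z ≠ c := by
      intro z hz h
      rw [h] at hz; linarith
    have hsp_ne_c : ∀ p : E n, ‖p‖ = 1 → p ≠ c := by
      intro p hp h
      rw [h] at hp; linarith
    have hdpc_pos : ∀ p : E n, ‖p‖ = 1 → 0 < dist p c := fun p hp =>
      dist_pos.mpr (hsp_ne_c p hp)
    have hdpc_lb : ∀ p : E n, ‖p‖ = 1 → (1 - s) / s ≤ dist p c := by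
      intro p hp
      have h := norm_sub_norm_le c p
      rw [hcn, hp] at h
      have heq : (1 - s) / s = s⁻¹ - 1 := by field_simp
      rw [heq]
      calc s⁻¹ - 1 ≤ ‖c - p‖ := h
        _ = dist p c := by rw [dist_eq_norm, norm_sub_rev]
    have hdpc_ub : ∀ p : E n, ‖p‖ = 1 → dist p c ≤ (1 + s) / s := by
      intro p hp
      have h := norm_sub_le p c
      rw [hcn, hp] at h
      have h2 : 1 + s⁻¹ = (1 + s) / s := by field_simp; ring
      calc dist p c = ‖p - c‖ := dist_eq_norm p c
        _ ≤ 1 + s⁻¹ := h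
        _ = (1 + s) / s := h2
    have ha_ne_c : a ≠ c := hne_c a ha1
    have hac : dist a c = (1 - s ^ 2) / s := by
      have h : a - c = (1 - (s ^ 2)⁻¹) • a := by
        rw [hc_def, sub_smul, one_smul]
      have hle : 1 - (s ^ 2)⁻¹ ≤ 0 := by
        have : 1 ≤ (s ^ 2)⁻¹ := (one_le_inv_iff₀.mpr ⟨by positivity, by nlinarith⟩)
        linarith
      rw [dist_eq_norm, h, norm_smul, Real.norm_eq_abs, abs_of_nonpos hle, ← hs_def]
      field_simp
      ring
    have key1 : ∀ p : E n, ‖p‖ = 1 → dist p a = s * dist p c := by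
      intro p hp
      have hip : (inner ℝ p c : ℝ) = (s ^ 2)⁻¹ * (inner ℝ p a : ℝ) := by
        rw [hc_def, real_inner_smul_right]
      have hsq : dist p a ^ 2 = (s * dist p c) ^ 2 := by
        rw [dist_eq_norm, dist_eq_norm, mul_pow, norm_sub_sq_real, norm_sub_sq_real,
          hp, hcn, hip, ← hs_def]
        field_simp
        ring
      exact (sq_eq_sq₀ dist_nonneg (by positivity)).mp hsq
    have g0 : inversion c r (0 : E n) = a := by
      rw [inversion]
      have hd : dist (0 : E n) c = s⁻¹ := by rw [dist_zero_left, hcn]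
      have hsc : (r / s⁻¹) ^ 2 = 1 - s ^ 2 := by
        rw [div_pow, hr2]
        field_simp
      rw [hd, hsc, hc_def]
      simp only [vsub_eq_sub, vadd_eq_add, zero_sub, smul_neg, smul_smul]
      match_scalars
      field_simp
      ring
    have ga : inversion c r a = 0 := by
      have h := inversion_inversion c hr0 (0 : E n)
      rwa [g0] at h
    have hf0 : f 0 = a := by rw [hfa 0, map_zero]; exact g0
    have hgnorm : ∀ p : E n, ‖p‖ = 1 → ‖inversion c r p‖ = 1 := by
      intro p hp
      have hpc := hsp_ne_c p hp
      have key := dist_inversion_inversion hpc ha_ne_c r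
      rw [ga, dist_zero_right, key1 p hp, hac, hr2] at key
      rw [key]
      have hd := hdpc_pos p hp
      field_simp
    set σ : Equiv.Perm (sphere (0 : E n) 1) :=
      { toFun := fun p => ⟨T.symm (inversion c r p), by
          rw [mem_sphere_zero_iff_norm, T.symm.norm_map]
          exact hgnorm p (mem_sphere_zero_iff_norm.mp p.2)⟩
        invFun := fun q => ⟨inversion c r (T q), by
          rw [mem_sphere_zero_iff_norm]
          exact hgnorm (T q) (by rw [T.norm_map]; exact mem_sphere_zero_iff_norm.mp q.2)⟩
        left_inv := fun p => Subtype.ext (by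
          show inversion c r (T (T.symm (inversion c r p))) = p
          rw [T.apply_symm_apply, inversion_inversion c hr0])
        right_inv := fun q => Subtype.ext (by
          show T.symm (inversion c r (inversion c r (T q))) = q
          rw [inversion_inversion c hr0, T.symm_apply_apply]) } with hσ
    have hterm : ∀ p : sphere (0 : E n) 1,
        t (f x) (f y) p = (r ^ 2 / dist (p : E n) c ^ 2) * t x y (σ p) := by
      intro P
      have hp : ‖(P : E n)‖ = 1 := mem_sphere_zero_iff_norm.mp P.2
      set q' : E n := inversion c r (P : E n) with hq'_def
      set q : E n := T.symm q' with hq_def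
      have hσP : ((σ P : sphere (0 : E n) 1) : E n) = q := rfl
      have hTq : T q = q' := T.apply_symm_apply q'
      have hTx : ‖T x‖ < 1 := by rw [T.norm_map]; exact hx
      have hTy : ‖T y‖ < 1 := by rw [T.norm_map]; exact hy
      have hTxc : T x ≠ c := hne_c _ hTx
      have hTyc : T y ≠ c := hne_c _ hTy
      have hq'1 : ‖q'‖ = 1 := hgnorm _ hp
      have hq'c : q' ≠ c := hsp_ne_c _ hq'1
      have hq1 : ‖q‖ = 1 := by rw [hq_def, T.symm.norm_map]; exact hq'1
      have hC : dist q' c = r ^ 2 / dist (P : E n) c := dist_inversion_center c (P : E n) r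
      have hPc := hdpc_pos _ hp
      have hA : 0 < dist (T x) c := dist_pos.mpr hTxc
      have hB : 0 < dist (T y) c := dist_pos.mpr hTyc
      have hxq : 0 < dist x q := dist_pos_of_ball hx hq1
      have hqy : 0 < dist q y := by rw [dist_comm]; exact dist_pos_of_ball hy hq1
      have d1 : dist (f x) (f y) =
          r ^ 2 / (dist (T x) c * dist (T y) c) * dist x y := by
        rw [hfa x, hfa y, dist_inversion_inversion hTxc hTyc, T.dist_map]
      have d2 : dist (f x) (P : E n) =
          r ^ 2 / (dist (T x) c * dist q' c) * dist x q := by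
        conv_lhs => rw [hfa x, ← inversion_inversion c hr0 (P : E n), ← hq'_def]
        rw [dist_inversion_inversion hTxc hq'c, ← hTq, T.dist_map]
      have d3 : dist (P : E n) (f y) =
          r ^ 2 / (dist q' c * dist (T y) c) * dist q y := by
        conv_lhs => rw [hfa y, ← inversion_inversion c hr0 (P : E n), ← hq'_def]
        rw [dist_inversion_inversion hq'c hTyc, ← hTq, T.dist_map]
      unfold t
      rw [d1, d2, d3, hσP, hC]
      field_simp
    rw [hf0, ← hs_def, iSup_congr hterm]
    have hL : 0 ≤ (1 - s) / (1 + s) := div_nonneg (by linarith) (by linarith)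
    refine ciSup_bounds (fun p : sphere (0 : E n) 1 => t x y p)
      (fun p : sphere (0 : E n) 1 => r ^ 2 / dist (p : E n) c ^ 2) σ
      (fun p => t_nonneg x y p)
      (dist x y / ((1 - ‖x‖) * (1 - ‖y‖)))
      (fun p => t_le hx hy (mem_sphere_zero_iff_norm.mp p.2))
      hL (fun P => ?_) (fun P => ?_)
    · have hp : ‖(P : E n)‖ = 1 := mem_sphere_zero_iff_norm.mp P.2
      have hub := hdpc_ub _ hp
      have hpos := hdpc_pos _ hp
      have h1ms : (1:ℝ) - s ≠ 0 := by linarith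
      have h1ps : (1:ℝ) + s ≠ 0 := by linarith
      calc (1 - s) / (1 + s) = r ^ 2 / ((1 + s) / s) ^ 2 := by
            rw [hr2]; field_simp; ring
        _ ≤ r ^ 2 / dist (P : E n) c ^ 2 :=
            div_le_div_of_nonneg_left (sq_nonneg r) (pow_pos hpos 2)
              (pow_le_pow_left₀ dist_nonneg hub 2)
    · have hp : ‖(P : E n)‖ = 1 := mem_sphere_zero_iff_norm.mp P.2
      have hlb := hdpc_lb _ hp
      have hpos := hdpc_pos _ hp
      have h1ms : (1:ℝ) - s ≠ 0 := by linarith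
      have h1ps : (1:ℝ) + s ≠ 0 := by linarith
      have hlb0 : 0 < (1 - s) / s := div_pos (by linarith) hs0
      calc r ^ 2 / dist (P : E n) c ^ 2 ≤ r ^ 2 / ((1 - s) / s) ^ 2 :=
            div_le_div_of_nonneg_left (sq_nonneg r) (pow_pos hlb0 2)
              (pow_le_pow_left₀ hlb0.le hlb 2)
        _ = (1 + s) / (1 - s) := by rw [hr2]; field_simp; ring
end

section
/- The bound (1+|a|)/(1-|a|) in the Möbius distortion of the Cassinian metric is sharp: for 0 < |a| < 1 with a = |a|e₁ and σ the inversion in the sphere S^{n-1}(a/|a|², √(1-|a|²)/|a|) (which maps B^n to B^n with σ(a)=0), taking x = 0 and y = t·e₁ with -1 < t < 0, one has c(σ(x), σ(y))/c(x,y) = (1+|a|)/(1-|a|). -/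
open Metric Set

/-- The first standard basis vector of R^n (n >= 2). -/
noncomputable def e1 (n : ℕ) (hn : 2 ≤ n) : E n := EuclideanSpace.single ⟨0, by omega⟩ 1

lemma norm_e1 (n : ℕ) (hn : 2 ≤ n) : ‖e1 n hn‖ = 1 := by
  simp [e1, EuclideanSpace.norm_single]

lemma dist_smul_e1 (n : ℕ) (hn : 2 ≤ n) (u v : ℝ) :
    dist (u • e1 n hn) (v • e1 n hn) = |u - v| := by
  rw [dist_eq_norm, ← sub_smul, norm_smul, norm_e1, mul_one, Real.norm_eq_abs]

lemma cass_eq {n : ℕ} (hn : 2 ≤ n) (x y p₀ : E n) (hp₀ : ‖p₀‖ = 1)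
    (hmin : ∀ p : E n, ‖p‖ = 1 → dist x p₀ * dist p₀ y ≤ dist x p * dist p y)
    (hpos : 0 < dist x p₀ * dist p₀ y) :
    cassinian (ball (0 : E n) 1) x y = dist x y / (dist x p₀ * dist p₀ y) := by
  have hfr : frontier (ball (0 : E n) 1) = sphere 0 1 := frontier_ball 0 one_ne_zero
  have hmem : p₀ ∈ sphere (0 : E n) 1 := by simpa [mem_sphere_zero_iff_norm] using hp₀
  haveI : Nonempty (sphere (0 : E n) 1) := ⟨⟨p₀, hmem⟩⟩
  have hbound : ∀ p : sphere (0 : E n) 1,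
      dist x y / (dist x (p : E n) * dist (p : E n) y) ≤
        dist x y / (dist x p₀ * dist p₀ y) := by
    intro p
    have hp : ‖(p : E n)‖ = 1 := by
      have := p.2; rwa [mem_sphere_zero_iff_norm] at this
    exact div_le_div_of_nonneg_left dist_nonneg hpos (hmin p hp)
  rw [cassinian, hfr]
  apply le_antisymm
  · exact ciSup_le hbound
  · refine le_ciSup_of_le ⟨dist x y / (dist x p₀ * dist p₀ y), ?_⟩
      (⟨p₀, hmem⟩ : sphere (0 : E n) 1) le_rfl
    rintro r ⟨p, rfl⟩
    exact hbound p

lemma cass_pos {n : ℕ} (hn : 2 ≤ n) (u v : ℝ) (hu : 0 ≤ u) (hu1 : u < 1)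
    (hv : 0 ≤ v) (hv1 : v < 1) :
    cassinian (ball (0 : E n) 1) (u • e1 n hn) (v • e1 n hn)
      = |u - v| / ((1 - u) * (1 - v)) := by
  have key : ∀ w : ℝ, 0 ≤ w → w < 1 → ∀ p : E n, ‖p‖ = 1 →
      1 - w ≤ ‖w • e1 n hn - p‖ := by
    intro w hw hw1 p hp
    have h1 : ‖p‖ - ‖w • e1 n hn‖ ≤ ‖p - w • e1 n hn‖ := norm_sub_norm_le _ _
    rw [norm_sub_rev] at h1
    rw [norm_smul, norm_e1, mul_one, Real.norm_eq_abs, abs_of_nonneg hw] at h1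
    linarith
  have h1 : dist (u • e1 n hn) (e1 n hn) = 1 - u := by
    have h := dist_smul_e1 n hn u 1
    rw [one_smul] at h
    rw [h, abs_of_nonpos (by linarith)]; ring
  have h2 : dist (e1 n hn) (v • e1 n hn) = 1 - v := by
    have h := dist_smul_e1 n hn 1 v
    rw [one_smul] at h
    rw [h, abs_of_nonneg (by linarith)]
  rw [cass_eq hn _ _ (e1 n hn) (norm_e1 n hn) ?_ ?_, h1, h2, dist_smul_e1]
  · intro p hp
    rw [h1, h2, dist_eq_norm, dist_eq_norm, norm_sub_rev p]
    exact mul_le_mul (key u hu hu1 p hp) (key v hv hv1 p hp) (by linarith) (by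
      have := key u hu hu1 p hp; linarith)
  · rw [h1, h2]; exact mul_pos (by linarith) (by linarith)

lemma cass_neg {n : ℕ} (hn : 2 ≤ n) (u v : ℝ) (hu : -1 < u) (hu1 : u ≤ 0)
    (hv : -1 < v) (hv1 : v ≤ 0) :
    cassinian (ball (0 : E n) 1) (u • e1 n hn) (v • e1 n hn)
      = |u - v| / ((1 + u) * (1 + v)) := by
  have key : ∀ w : ℝ, -1 < w → w ≤ 0 → ∀ p : E n, ‖p‖ = 1 →
      1 + w ≤ ‖w • e1 n hn - p‖ := by
    intro w hw hw1 p hp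
    have h1 : ‖p‖ - ‖w • e1 n hn‖ ≤ ‖p - w • e1 n hn‖ := norm_sub_norm_le _ _
    rw [norm_sub_rev] at h1
    rw [norm_smul, norm_e1, mul_one, Real.norm_eq_abs, abs_of_nonpos hw1] at h1
    linarith
  have h1 : dist (u • e1 n hn) ((-1 : ℝ) • e1 n hn) = 1 + u := by
    rw [dist_smul_e1, abs_of_nonneg (by linarith)]; ring
  have h2 : dist ((-1 : ℝ) • e1 n hn) (v • e1 n hn) = 1 + v := by
    rw [dist_smul_e1, abs_of_nonpos (by linarith)]; ring
  have hn1 : ‖(-1 : ℝ) • e1 n hn‖ = 1 := by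
    rw [norm_smul, norm_e1, mul_one]; norm_num
  rw [cass_eq hn _ _ ((-1 : ℝ) • e1 n hn) hn1 ?_ ?_, h1, h2, dist_smul_e1]
  · intro p hp
    rw [h1, h2, dist_eq_norm, dist_eq_norm, norm_sub_rev p]
    exact mul_le_mul (key u hu hu1 p hp) (key v hv hv1 p hp) (by linarith) (by
      have := key u hu hu1 p hp; linarith)
  · rw [h1, h2]; exact mul_pos (by linarith) (by linarith)

lemma inv_pt (n : ℕ) (hn : 2 ≤ n) (al v : ℝ) (hal : 0 < al) (hal1 : al < 1)
    (hv1 : v < 1) :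
    EuclideanGeometry.inversion ((‖al • e1 n hn‖ ^ 2)⁻¹ • (al • e1 n hn))
        (Real.sqrt (1 - ‖al • e1 n hn‖ ^ 2) / ‖al • e1 n hn‖) (v • e1 n hn)
      = ((al - v) / (1 - al * v)) • e1 n hn := by
  have hnal : ‖al • e1 n hn‖ = al := by
    rw [norm_smul, norm_e1, mul_one, Real.norm_eq_abs, abs_of_pos hal]
  have hal0 : al ≠ 0 := ne_of_gt hal
  have hcenter : (‖al • e1 n hn‖ ^ 2)⁻¹ • (al • e1 n hn) = al⁻¹ • e1 n hn := by
    rw [hnal, smul_smul]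
    congr 1
    field_simp
  have hvlt : v < al⁻¹ := by
    have hh : al * al⁻¹ = 1 := mul_inv_cancel₀ hal0
    nlinarith
  have hdist : dist (v • e1 n hn) (al⁻¹ • e1 n hn) = al⁻¹ - v := by
    rw [dist_smul_e1, abs_of_nonpos (by linarith)]; ring
  rw [hcenter, hnal, EuclideanGeometry.inversion, hdist]
  have hsub : (v • e1 n hn) -ᵥ (al⁻¹ • e1 n hn) = (v - al⁻¹) • e1 n hn := by
    rw [vsub_eq_sub, ← sub_smul]
  rw [hsub, smul_smul, vadd_eq_add, ← add_smul]
  congr 1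
  have hsq : Real.sqrt (1 - al ^ 2) ^ 2 = 1 - al ^ 2 :=
    Real.sq_sqrt (by nlinarith)
  have h1 : al⁻¹ - v ≠ 0 := by intro h; linarith [hvlt]
  have h2 : 1 - al * v ≠ 0 := by
    have hh : al * al⁻¹ = 1 := mul_inv_cancel₀ hal0
    nlinarith
  rw [div_pow, div_pow, hsq]
  field_simp
  ring

theorem cassinian_mobius_sharp (n : ℕ) (hn : 2 ≤ n) (al t : ℝ)
    (hal : 0 < al) (hal1 : al < 1) (ht : -1 < t) (ht0 : t < 0) :
    cassinian (ball (0 : E n) 1)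
        (EuclideanGeometry.inversion ((‖al • e1 n hn‖ ^ 2)⁻¹ • (al • e1 n hn))
          (Real.sqrt (1 - ‖al • e1 n hn‖ ^ 2) / ‖al • e1 n hn‖) (0 : E n))
        (EuclideanGeometry.inversion ((‖al • e1 n hn‖ ^ 2)⁻¹ • (al • e1 n hn))
          (Real.sqrt (1 - ‖al • e1 n hn‖ ^ 2) / ‖al • e1 n hn‖) (t • e1 n hn)) /
      cassinian (ball (0 : E n) 1) (0 : E n) (t • e1 n hn) = (1 + al) / (1 - al) := by
  have h1at : (0 : ℝ) < 1 - al * t := by nlinarith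
  set s : ℝ := (al - t) / (1 - al * t) with hs
  have hs0 : 0 < s := by
    apply div_pos (by linarith) h1at
  have hs1 : s < 1 := by
    rw [div_lt_one h1at]; nlinarith
  have hgt : al < s := by
    rw [lt_div_iff₀ h1at]
    nlinarith [mul_pos (neg_pos.2 ht0) (show (0:ℝ) < 1 - al^2 by nlinarith)]
  have hinv0 : EuclideanGeometry.inversion ((‖al • e1 n hn‖ ^ 2)⁻¹ • (al • e1 n hn))
      (Real.sqrt (1 - ‖al • e1 n hn‖ ^ 2) / ‖al • e1 n hn‖) (0 : E n) = al • e1 n hn := by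
    rw [show (0 : E n) = (0 : ℝ) • e1 n hn from (zero_smul _ _).symm,
      inv_pt n hn al 0 hal hal1 one_pos]
    norm_num
  have hinvt : EuclideanGeometry.inversion ((‖al • e1 n hn‖ ^ 2)⁻¹ • (al • e1 n hn))
      (Real.sqrt (1 - ‖al • e1 n hn‖ ^ 2) / ‖al • e1 n hn‖) (t • e1 n hn) = s • e1 n hn :=
    inv_pt n hn al t hal hal1 (by linarith)
  have h2 : cassinian (ball (0 : E n) 1) (0 : E n) (t • e1 n hn) = (-t) / (1 + t) := by
    have h := cass_neg hn 0 t (by norm_num) le_rfl ht ht0.le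
    rw [zero_smul] at h
    rw [h, zero_sub, abs_neg, abs_of_neg ht0]
    norm_num
  rw [hinv0, hinvt, h2, cass_pos hn al s hal.le hal1 hs0.le hs1,
    abs_of_nonpos (by linarith)]
  have ht1 : (0 : ℝ) < 1 + t := by linarith
  have h1a : (0 : ℝ) < 1 - al := by linarith
  have hne1 : (1 : ℝ) + t ≠ 0 := by linarith
  have hne2 : (1 : ℝ) - al ≠ 0 := by linarith
  have e2 : 1 - s = (1 - al) * (1 + t) / (1 - al * t) := by
    rw [hs]; field_simp; ring
  have e3 : -(al - s) = -t * ((1 - al) * (1 + al)) / (1 - al * t) := by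
    rw [hs]; field_simp; ring
  have goal_eq : -(al - s) / ((1 - al) * (1 - s)) = -t / (1 + t) * ((1 + al) / (1 - al)) := by
    rw [e2, e3]
    have hne3 : (1 : ℝ) - al * t ≠ 0 := h1at.ne'
    rw [div_eq_iff (by simp [hne1, hne2, hne3])]
    field_simp
  rw [goal_eq]
  exact mul_div_cancel_left₀ _ (div_ne_zero (by linarith) hne1)
end

section
/- For the punctured space D = R^n \ {0}, the inner Cassinian metric equals the Cassinian metric: c̃_D(x,y) = c_D(x,y) = |x-y|/(|x||y|) for all x, y ∈ D. -/
open Metric Set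

/-- The Cassinian length of a curve `g : [0,1] → ℝⁿ`: the supremum over partitions
of `[0,1]` of the sums of Cassinian distances of consecutive points. -/
noncomputable def cassinianLength {n : ℕ} (D : Set (E n)) (g : ℝ → E n) : ENNReal :=
  ⨆ p : ℕ × {u : ℕ → ℝ // Monotone u ∧ ∀ i, u i ∈ Icc (0 : ℝ) 1},
    ∑ i ∈ Finset.range p.1, ENNReal.ofReal (cassinian D (g (p.2.1 i)) (g (p.2.1 (i + 1))))

/-- The inner Cassinian metric: the infimum of Cassinian lengths over curves in `D`
joining `x` to `y`. -/
noncomputable def innerCassinian {n : ℕ} (D : Set (E n)) (x y : E n) : ENNReal :=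
  ⨅ g : {g : ℝ → E n // ContinuousOn g (Icc (0 : ℝ) 1) ∧ g 0 = x ∧ g 1 = y ∧
      g '' Icc (0 : ℝ) 1 ⊆ D},
    cassinianLength D g.1

section Aux

open EuclideanGeometry RealInnerProductSpace

variable {n : ℕ}

lemma frontier_punctured (h : ∃ z : E n, z ≠ 0) :
    frontier ({0}ᶜ : Set (E n)) = {0} := by
  obtain ⟨z, hz⟩ := h
  haveI : Nontrivial (E n) := ⟨z, 0, hz⟩
  rw [frontier_compl, frontier, closure_singleton, interior_singleton, diff_empty]

lemma cassinian_punctured_eq (h : ∃ z : E n, z ≠ 0) (p q : E n) :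
    cassinian ({0}ᶜ : Set (E n)) p q = dist p q / (‖p‖ * ‖q‖) := by
  have hfr := frontier_punctured h
  have hne : Nonempty (frontier ({0}ᶜ : Set (E n))) := ⟨⟨0, by rw [hfr]; exact rfl⟩⟩
  have hcongr : ∀ p' : frontier ({0}ᶜ : Set (E n)),
      dist p q / (dist p (p' : E n) * dist (p' : E n) q) = dist p q / (‖p‖ * ‖q‖) := by
    rintro ⟨z, hz⟩
    rw [hfr] at hz
    obtain rfl : z = 0 := hz
    simp
  calc cassinian ({0}ᶜ : Set (E n)) p q
      = ⨆ _ : frontier ({0}ᶜ : Set (E n)), dist p q / (‖p‖ * ‖q‖) := iSup_congr hcongr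
    _ = dist p q / (‖p‖ * ‖q‖) := ciSup_const

lemma dist_inversion0 {p q : E n} (hp : p ≠ 0) (hq : q ≠ 0) :
    dist (inversion (0 : E n) 1 p) (inversion (0 : E n) 1 q) = dist p q / (‖p‖ * ‖q‖) := by
  rw [dist_inversion_inversion hp hq, one_pow, dist_zero_right, dist_zero_right]
  ring

lemma cassinian_inv_inv (h : ∃ z : E n, z ≠ 0) {p q : E n} (hp : p ≠ 0) (hq : q ≠ 0) :
    cassinian ({0}ᶜ : Set (E n)) (inversion (0 : E n) 1 p) (inversion (0 : E n) 1 q)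
      = dist p q := by
  have hp' : inversion (0 : E n) 1 p ≠ 0 := by
    simpa [inversion_eq_center (c := (0 : E n)) one_ne_zero] using hp
  have hq' : inversion (0 : E n) 1 q ≠ 0 := by
    simpa [inversion_eq_center (c := (0 : E n)) one_ne_zero] using hq
  have h1 := dist_inversion0 hp' hq'
  rw [inversion_inversion _ one_ne_zero, inversion_inversion _ one_ne_zero] at h1
  rw [cassinian_punctured_eq h, ← h1]

end Aux

open EuclideanGeometry RealInnerProductSpace in
set_option maxHeartbeats 1000000 in
theorem innerCassinian_punctured (n : ℕ) (hn : 2 ≤ n) (x y : E n)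
    (hx : x ∈ ({0}ᶜ : Set (E n))) (hy : y ∈ ({0}ᶜ : Set (E n))) :
    innerCassinian ({0}ᶜ : Set (E n)) x y = ENNReal.ofReal (dist x y / (‖x‖ * ‖y‖)) ∧
      cassinian ({0}ᶜ : Set (E n)) x y = dist x y / (‖x‖ * ‖y‖) := by
  have hx' : x ≠ 0 := hx
  have hy' : y ≠ 0 := hy
  have hex : ∃ z : E n, z ≠ 0 := ⟨x, hx'⟩
  set D : Set (E n) := ({0}ᶜ : Set (E n)) with hD
  set d : ℝ := dist x y / (‖x‖ * ‖y‖) with hd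
  have hd0 : 0 ≤ d := by positivity
  refine ⟨le_antisymm ?_ ?_, cassinian_punctured_eq hex x y⟩
  · -- upper bound
    have key : ∀ δ : ℝ, 0 < δ → innerCassinian D x y ≤ ENNReal.ofReal (d + δ) := by
      intro δ hδ
      set a : E n := inversion (0 : E n) 1 x with ha_def
      set b : E n := inversion (0 : E n) 1 y with hb_def
      have ha : a ≠ 0 := by
        simpa [ha_def, inversion_eq_center (c := (0 : E n)) one_ne_zero] using hx'
      have hb : b ≠ 0 := by
        simpa [hb_def, inversion_eq_center (c := (0 : E n)) one_ne_zero] using hy'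
      have hdab : dist a b = d := dist_inversion0 hx' hy'
      obtain ⟨w, hw_norm, hw_ne⟩ : ∃ w : E n, ‖w‖ ≤ 1 ∧
          ∀ t ∈ Icc (0 : ℝ) 1, a + t • (b - a) + (δ * (t * (1 - t))) • w ≠ 0 := by
        by_cases h0 : (0 : E n) ∈ segment ℝ a b
        · -- a, b collinear through 0: bend the segment
          have hK : (ℝ ∙ a)ᗮ ≠ ⊥ := by
            intro hbot
            have htop : (ℝ ∙ a) = ⊤ := Submodule.orthogonal_eq_bot_iff.mp hbot
            have h1 : Module.finrank ℝ (ℝ ∙ a) = 1 := finrank_span_singleton ha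
            rw [htop, finrank_top, finrank_euclideanSpace_fin] at h1
            omega
          obtain ⟨w₀, hw₀K, hw₀⟩ := Submodule.exists_mem_ne_zero_of_ne_bot hK
          set w : E n := ‖w₀‖⁻¹ • w₀ with hw_def
          have hw1 : ‖w‖ = 1 := norm_smul_inv_norm hw₀
          have hwa : (inner ℝ a w : ℝ) = 0 := by
            have h2 : (inner ℝ a w₀ : ℝ) = 0 :=
              hw₀K a (Submodule.mem_span_singleton_self a)
            rw [hw_def, real_inner_smul_right, h2, mul_zero]
          have hwb : (inner ℝ b w : ℝ) = 0 := by
            obtain ⟨s, t, hs, ht, hst, heq⟩ := h0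
            have ht0 : t ≠ 0 := by
              rintro rfl
              rw [add_zero] at hst
              rw [hst, one_smul, zero_smul, add_zero] at heq
              exact ha heq
            have h3 : s * (inner ℝ a w : ℝ) + t * (inner ℝ b w : ℝ) = 0 := by
              rw [← real_inner_smul_left, ← real_inner_smul_left, ← inner_add_left, heq,
                inner_zero_left]
            rw [hwa, mul_zero, zero_add] at h3
            exact (mul_eq_zero.mp h3).resolve_left ht0
          refine ⟨w, le_of_eq hw1, fun t ht hzero => ?_⟩
          have hin : (inner ℝ (a + t • (b - a) + (δ * (t * (1 - t))) • w) w : ℝ) = δ * (t * (1 - t)) := by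
            rw [inner_add_left, inner_add_left, real_inner_smul_left, real_inner_smul_left,
              inner_sub_left, hwa, hwb, real_inner_self_eq_norm_sq, hw1]
            ring
          rw [hzero, inner_zero_left] at hin
          have h4 : t * (1 - t) = 0 := by
            have := hin.symm
            rcases mul_eq_zero.mp this with h | h
            · exact absurd h hδ.ne'
            · exact h
          rcases mul_eq_zero.mp h4 with h | h
          · subst h
            have : a = 0 := by simpa using hzero
            exact ha this
          · have ht1 : t = 1 := by linarith
            subst ht1
            have : b = 0 := by simpa using hzero
            exact hb this
        · -- 0 not on segment: straight segment works
          refine ⟨0, by simp, fun t ht hzero => h0 ?_⟩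
          rw [smul_zero, add_zero] at hzero
          rw [← hzero]
          rw [segment_eq_image' ℝ a b]
          exact ⟨t, ht, rfl⟩
      set h : ℝ → E n := fun t => a + t • (b - a) + (δ * (t * (1 - t))) • w with hh_def
      have hh0 : h 0 = a := by simp [hh_def]
      have hh1 : h 1 = b := by simp [hh_def]
      have hh_ne : ∀ t ∈ Icc (0 : ℝ) 1, h t ≠ 0 := hw_ne
      have hh_cont : Continuous h := by fun_prop
      have hlip : ∀ s t : ℝ, s ∈ Icc (0 : ℝ) 1 → t ∈ Icc (0 : ℝ) 1 → s ≤ t →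
          dist (h s) (h t) ≤ (t - s) * (d + δ) := by
        intro s t hs ht hst
        have hdiff : h t - h s = (t - s) • (b - a) + (δ * ((t - s) * (1 - t - s))) • w := by
          simp only [hh_def]
          module
        have hnb : ‖b - a‖ = d := by rw [← hdab, dist_eq_norm']
        rw [dist_eq_norm', hdiff]
        refine (norm_add_le _ _).trans ?_
        rw [norm_smul, norm_smul, hnb, Real.norm_eq_abs, Real.norm_eq_abs]
        have h1 : |t - s| = t - s := abs_of_nonneg (by linarith)
        have h2 : |δ * ((t - s) * (1 - t - s))| ≤ δ * (t - s) := by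
          rw [abs_mul, abs_mul, abs_of_pos hδ, h1]
          have : |1 - t - s| ≤ 1 := by
            rw [abs_le]
            constructor <;> linarith [hs.1, hs.2, ht.1, ht.2]
          nlinarith [mul_nonneg (sub_nonneg.mpr hst) (sub_nonneg.mpr this), hδ.le]
        rw [h1]
        nlinarith [h2, hw_norm, abs_nonneg (δ * ((t - s) * (1 - t - s))), norm_nonneg w]
      set g : ℝ → E n := fun t => inversion (0 : E n) 1 (h t) with hg_def
      have hg_cont : ContinuousOn g (Icc (0 : ℝ) 1) :=
        ContinuousOn.inversion continuousOn_const continuousOn_const hh_cont.continuousOn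
          (fun t ht => hh_ne t ht)
      have hg0 : g 0 = x := by
        rw [hg_def]
        simp only [hh0, ha_def]
        exact inversion_inversion _ one_ne_zero x
      have hg1 : g 1 = y := by
        rw [hg_def]
        simp only [hh1, hb_def]
        exact inversion_inversion _ one_ne_zero y
      have hg_sub : g '' Icc (0 : ℝ) 1 ⊆ D := by
        rintro _ ⟨t, ht, rfl⟩
        simp only [hD, mem_compl_iff, mem_singleton_iff, hg_def]
        rw [inversion_eq_center (c := (0 : E n)) one_ne_zero]
        exact hh_ne t ht
      refine iInf_le_of_le ⟨g, hg_cont, hg0, hg1, hg_sub⟩ ?_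
      refine iSup_le ?_
      rintro ⟨k, u, hu_mono, hu_mem⟩
      simp only
      have hterm : ∀ i : ℕ, cassinian D (g (u i)) (g (u (i + 1))) = dist (h (u i)) (h (u (i + 1))) := by
        intro i
        exact cassinian_inv_inv hex (hh_ne _ (hu_mem i)) (hh_ne _ (hu_mem (i + 1)))
      calc ∑ i ∈ Finset.range k, ENNReal.ofReal (cassinian D (g (u i)) (g (u (i + 1))))
          ≤ ∑ i ∈ Finset.range k, ENNReal.ofReal ((u (i + 1) - u i) * (d + δ)) := by
            refine Finset.sum_le_sum fun i _ => ENNReal.ofReal_le_ofReal ?_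
            rw [hterm i]
            exact hlip _ _ (hu_mem i) (hu_mem (i + 1)) (hu_mono (Nat.le_succ i))
        _ = ENNReal.ofReal (∑ i ∈ Finset.range k, (u (i + 1) - u i) * (d + δ)) := by
            rw [ENNReal.ofReal_sum_of_nonneg]
            intro i _
            have := hu_mono (Nat.le_succ i)
            nlinarith [hδ.le]
        _ = ENNReal.ofReal ((u k - u 0) * (d + δ)) := by
            rw [← Finset.sum_mul, Finset.sum_range_sub]
        _ ≤ ENNReal.ofReal (d + δ) := by
            refine ENNReal.ofReal_le_ofReal ?_
            have h1 : u k ≤ 1 := (hu_mem k).2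
            have h2 : 0 ≤ u 0 := (hu_mem 0).1
            nlinarith [hδ.le]
    refine ENNReal.le_of_forall_pos_le_add fun ε hε _ => ?_
    calc innerCassinian D x y ≤ ENNReal.ofReal (d + ε) := key ε (by exact_mod_cast hε)
      _ ≤ ENNReal.ofReal d + ENNReal.ofReal ε := ENNReal.ofReal_add_le
      _ = ENNReal.ofReal d + ε := by rw [ENNReal.ofReal_coe_nnreal]
  · -- lower bound
    refine le_iInf ?_
    rintro ⟨g, hg_cont, hg0, hg1, hg_sub⟩
    set u : ℕ → ℝ := fun i => min (i : ℝ) 1 with hu_def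
    have hu_mono : Monotone u := fun i j hij => min_le_min (Nat.cast_le.2 hij) le_rfl
    have hu_mem : ∀ i, u i ∈ Icc (0 : ℝ) 1 := fun i =>
      ⟨le_min (Nat.cast_nonneg i) zero_le_one, min_le_right _ _⟩
    have hu0 : u 0 = 0 := by simp [hu_def]
    have hu1 : u 1 = 1 := by simp [hu_def]
    refine le_iSup_of_le (⟨1, ⟨u, hu_mono, hu_mem⟩⟩ :
      ℕ × {u : ℕ → ℝ // Monotone u ∧ ∀ i, u i ∈ Icc (0 : ℝ) 1}) ?_
    simp only [Finset.range_one, Finset.sum_singleton, hu0, hu1, hg0, hg1]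
    rw [cassinian_punctured_eq hex]
end

section
/- In the unit ball B^n, for each x ∈ B^n, the inner Cassinian distance from 0 to x equals the Cassinian distance: c̃(0,x) = c(0,x) = |x|/(1-|x|). -/
open Metric Set

lemma sphere_nonempty' (n : ℕ) (hn : 2 ≤ n) : Nonempty (sphere (0 : E n) 1) := by
  refine ⟨⟨EuclideanSpace.single (⟨0, by omega⟩ : Fin n) (1 : ℝ), ?_⟩⟩
  rw [mem_sphere_zero_iff_norm, EuclideanSpace.norm_single]
  simp

lemma cass_seg (n : ℕ) (hn : 2 ≤ n) (x : E n) (hx : ‖x‖ < 1) {s t : ℝ}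
    (hs : 0 ≤ s) (hst : s ≤ t) (ht : t ≤ 1) :
    cassinian (ball (0 : E n) 1) (s • x) (t • x)
      = (t - s) * ‖x‖ / ((1 - s * ‖x‖) * (1 - t * ‖x‖)) := by
  have hr0 : 0 ≤ ‖x‖ := norm_nonneg x
  set r := ‖x‖ with hrdef
  haveI := sphere_nonempty' n hn
  have hds : (0 : ℝ) < 1 - s * r := by
    nlinarith [mul_nonneg (by linarith : (0:ℝ) ≤ 1 - s) hr0]
  have hdt : (0 : ℝ) < 1 - t * r := by
    nlinarith [mul_nonneg (by linarith : (0:ℝ) ≤ 1 - t) hr0]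
  have hC0 : (0 : ℝ) ≤ (t - s) * r := mul_nonneg (by linarith) hr0
  have hst' : dist (s • x) (t • x) = (t - s) * r := by
    rw [dist_eq_norm, ← sub_smul, norm_smul, Real.norm_eq_abs,
      abs_of_nonpos (sub_nonpos.mpr hst)]
    ring
  unfold cassinian
  rw [frontier_ball (0 : E n) one_ne_zero]
  have hnorm : ∀ (a : ℝ), 0 ≤ a → ‖a • x‖ = a * r := by
    intro a ha
    rw [norm_smul, Real.norm_eq_abs, abs_of_nonneg ha]
  have key : ∀ p : sphere (0 : E n) 1,
      dist (s • x) (t • x) / (dist (s • x) (p : E n) * dist (p : E n) (t • x))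
        ≤ (t - s) * r / ((1 - s * r) * (1 - t * r)) := by
    intro p
    have hp : ‖(p : E n)‖ = 1 := mem_sphere_zero_iff_norm.mp p.2
    have h1 : 1 - s * r ≤ dist (s • x) (p : E n) := by
      have := norm_sub_norm_le ((p : E n)) (s • x)
      rw [hp, hnorm s hs, ← dist_eq_norm, dist_comm] at this
      linarith
    have h2 : 1 - t * r ≤ dist (p : E n) (t • x) := by
      have := norm_sub_norm_le ((p : E n)) (t • x)
      rw [hp, hnorm t (hs.trans hst), ← dist_eq_norm] at this
      linarith
    rw [hst']
    gcongr
  apply le_antisymm (ciSup_le key)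
  rcases eq_or_ne x 0 with h0 | h0
  · have hr : r = 0 := by rw [hrdef, h0, norm_zero]
    obtain ⟨p⟩ := sphere_nonempty' n hn
    calc (t - s) * r / ((1 - s * r) * (1 - t * r)) = 0 := by rw [hr]; simp
      _ ≤ dist (s • x) (t • x) / (dist (s • x) (p : E n) * dist (p : E n) (t • x)) := by
          positivity
      _ ≤ _ := le_ciSup ⟨(t - s) * r / ((1 - s * r) * (1 - t * r)), by
          rintro _ ⟨p, rfl⟩; exact key p⟩ p
  · have hrpos : 0 < r := by rwa [hrdef, norm_pos_iff]
    have hinv : (1 : ℝ) ≤ r⁻¹ := by simpa using inv_anti₀ hrpos hx.le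
    have hmem : (r⁻¹ • x) ∈ sphere (0 : E n) 1 := by
      rw [mem_sphere_zero_iff_norm, norm_smul, Real.norm_eq_abs,
        abs_of_nonneg (by positivity)]
      field_simp
      exact hrdef.symm
    have hd1 : dist (s • x) (r⁻¹ • x) = 1 - s * r := by
      rw [dist_eq_norm, ← sub_smul, norm_smul, Real.norm_eq_abs,
        abs_of_nonpos (by linarith : s - r⁻¹ ≤ 0)]
      field_simp
      rw [← hrdef]; ring
    have hd2 : dist (r⁻¹ • x) (t • x) = 1 - t * r := by
      rw [dist_eq_norm, ← sub_smul, norm_smul, Real.norm_eq_abs,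
        abs_of_nonneg (by linarith : 0 ≤ r⁻¹ - t)]
      field_simp
      ring
    refine le_ciSup_of_le ⟨(t - s) * r / ((1 - s * r) * (1 - t * r)), by
        rintro _ ⟨p, rfl⟩; exact key p⟩ ⟨r⁻¹ • x, hmem⟩ ?_
    rw [hst', hd1, hd2]

lemma cass_zero (n : ℕ) (hn : 2 ≤ n) (x : E n) (hx : ‖x‖ < 1) :
    cassinian (ball (0 : E n) 1) 0 x = ‖x‖ / (1 - ‖x‖) := by
  have h := cass_seg n hn x hx (le_refl 0) zero_le_one le_rfl
  simpa using h

theorem innerCassinian_ball_zero (n : ℕ) (hn : 2 ≤ n) (x : E n)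
    (hx : x ∈ ball (0 : E n) 1) :
    innerCassinian (ball (0 : E n) 1) (0 : E n) x =
        ENNReal.ofReal (cassinian (ball (0 : E n) 1) (0 : E n) x) ∧
      cassinian (ball (0 : E n) 1) (0 : E n) x = ‖x‖ / (1 - ‖x‖) := by
  have hx' : ‖x‖ < 1 := mem_ball_zero_iff.mp hx
  have hr0 : 0 ≤ ‖x‖ := norm_nonneg x
  set r := ‖x‖ with hrdef
  have h2 := cass_zero n hn x hx'
  refine ⟨?_, h2⟩
  rw [h2]
  apply le_antisymm
  · -- upper bound via the straight segment g t = t • x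
    have hgprop : ContinuousOn (fun t : ℝ => t • x) (Icc 0 1) ∧
        (fun t : ℝ => t • x) 0 = 0 ∧ (fun t : ℝ => t • x) 1 = x ∧
        (fun t : ℝ => t • x) '' Icc 0 1 ⊆ ball (0 : E n) 1 := by
      refine ⟨(continuous_id.smul continuous_const).continuousOn, zero_smul ℝ x,
        one_smul ℝ x, ?_⟩
      rintro _ ⟨t, ⟨ht0, ht1⟩, rfl⟩
      rw [mem_ball_zero_iff, norm_smul, Real.norm_eq_abs, abs_of_nonneg ht0]
      nlinarith [mul_nonneg (by linarith : (0:ℝ) ≤ 1 - t) hr0]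
    refine (iInf_le _ ⟨fun t : ℝ => t • x, hgprop⟩).trans ?_
    unfold cassinianLength
    apply iSup_le
    rintro ⟨k, u, hu, hmem⟩
    have hd : ∀ i : ℕ, (0 : ℝ) < 1 - u i * r := by
      intro i
      nlinarith [(hmem i).1, (hmem i).2, mul_nonneg (by linarith [(hmem i).2] : (0:ℝ) ≤ 1 - u i) hr0]
    have hkey : ∀ i : ℕ, cassinian (ball (0 : E n) 1) (u i • x) (u (i + 1) • x)
        = (1 - u (i + 1) * r)⁻¹ - (1 - u i * r)⁻¹ := by
      intro i
      rw [cass_seg n hn x hx' (hmem i).1 (hu (Nat.le_succ i)) (hmem (i + 1)).2]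
      rw [← hrdef]
      have d1 := hd i
      have d2 := hd (i + 1)
      field_simp
      ring
    have hmono : ∀ i : ℕ, (0 : ℝ) ≤ (1 - u (i + 1) * r)⁻¹ - (1 - u i * r)⁻¹ := by
      intro i
      have : 1 - u (i + 1) * r ≤ 1 - u i * r := by
        nlinarith [mul_le_mul_of_nonneg_right (hu (Nat.le_succ i)) hr0]
      have := inv_anti₀ (hd (i + 1)) this
      linarith
    calc ∑ i ∈ Finset.range k,
          ENNReal.ofReal (cassinian (ball (0 : E n) 1) (u i • x) (u (i + 1) • x))
        = ENNReal.ofReal (∑ i ∈ Finset.range k,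
            ((1 - u (i + 1) * r)⁻¹ - (1 - u i * r)⁻¹)) := by
          rw [ENNReal.ofReal_sum_of_nonneg (fun i _ => hmono i)]
          exact Finset.sum_congr rfl fun i _ => by rw [hkey i]
      _ = ENNReal.ofReal ((1 - u k * r)⁻¹ - (1 - u 0 * r)⁻¹) := by
          rw [Finset.sum_range_sub (fun i => (1 - u i * r)⁻¹)]
      _ ≤ ENNReal.ofReal (r / (1 - r)) := by
          apply ENNReal.ofReal_le_ofReal
          have hk1 : (1 - u k * r)⁻¹ ≤ (1 - r)⁻¹ := by
            apply inv_anti₀ (by linarith)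
            nlinarith [(hmem k).2, mul_le_mul_of_nonneg_right (hmem k).2 hr0]
          have hk0 : (1 : ℝ) ≤ (1 - u 0 * r)⁻¹ := by
            have := inv_anti₀ (hd 0)
              (by nlinarith [mul_nonneg (hmem 0).1 hr0] : 1 - u 0 * r ≤ 1)
            simpa using this
          have h1r : (1 : ℝ) - r ≠ 0 := by linarith
          have hE : r / (1 - r) = (1 - r)⁻¹ - 1 := by
            rw [inv_eq_one_div, div_sub' h1r]
            ring_nf
          linarith
  · -- lower bound via the one-step partition
    unfold innerCassinian
    apply le_iInf
    rintro ⟨g, hgc, hg0, hg1, hgsub⟩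
    unfold cassinianLength
    have humono : Monotone (fun i : ℕ => min (i : ℝ) 1) :=
      fun a b hab => min_le_min (by exact_mod_cast hab) le_rfl
    have humem : ∀ i : ℕ, min (i : ℝ) 1 ∈ Icc (0 : ℝ) 1 :=
      fun i => ⟨le_min (by positivity) zero_le_one, min_le_right _ _⟩
    refine le_trans (le_of_eq ?_)
      (le_iSup _ (1, ⟨fun i : ℕ => min (i : ℝ) 1, humono, humem⟩))
    rw [Finset.sum_range_one]
    norm_num
    rw [hg0, hg1, h2]
end

section
/- For a proper subdomain D ⊊ R^n, x ∈ D, and y ∈ D with |x-y| < δ_D(x), the inner Cassinian metric satisfies c̃_D(x,y) ≤ |x-y|/(δ_D(x)·(δ_D(x) - |x-y|)). -/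
open Metric Set

lemma ball_infDist_frontier_subset {n : ℕ} {D : Set (E n)} (hD : IsOpen D) {x : E n}
    (hx : x ∈ D) : ball x (infDist x (frontier D)) ⊆ D := by
  intro z hz
  by_contra hzD
  have hseg : (segment ℝ x z ∩ frontier D).Nonempty := by
    by_contra h
    rw [not_nonempty_iff_eq_empty] at h
    have hdisj : Disjoint (frontier D) (segment ℝ x z) := by
      rw [disjoint_comm, disjoint_iff_inter_eq_empty]; exact h
    have hclopen := isClopen_preimage_val hD hdisj
    haveI : PreconnectedSpace (segment ℝ x z) :=
      Subtype.preconnectedSpace (convex_segment x z).isPreconnected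
    have huniv := hclopen.eq_univ ⟨⟨x, left_mem_segment ℝ x z⟩, hx⟩
    have hmem : (⟨z, right_mem_segment ℝ x z⟩ : segment ℝ x z) ∈
        (Subtype.val ⁻¹' D : Set (segment ℝ x z)) := huniv ▸ mem_univ _
    exact hzD hmem
  obtain ⟨p, hpseg, hpf⟩ := hseg
  have h1 : infDist x (frontier D) ≤ dist x p := infDist_le_dist_of_mem hpf
  have h2 : dist x p ≤ dist x z := by
    have := dist_add_dist_of_mem_segment hpseg
    have := dist_nonneg (x := p) (y := z)
    linarith
  rw [mem_ball, dist_comm] at hz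
  linarith

lemma cassinian_le {n : ℕ} {D : Set (E n)} {u v : E n}
    (hu : 0 < infDist u (frontier D)) (hv : 0 < infDist v (frontier D)) :
    cassinian D u v ≤ dist u v / (infDist u (frontier D) * infDist v (frontier D)) := by
  apply Real.iSup_le
  · rintro ⟨p, hp⟩
    have h1 : infDist u (frontier D) ≤ dist u p := infDist_le_dist_of_mem hp
    have h2 : infDist v (frontier D) ≤ dist p v := by
      rw [dist_comm]; exact infDist_le_dist_of_mem hp
    exact div_le_div_of_nonneg_left dist_nonneg (mul_pos hu hv)
      (mul_le_mul h1 h2 hv.le (by positivity))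
  · positivity

set_option maxHeartbeats 1000000 in
theorem innerCassinian_upper_bound (n : ℕ) (hn : 2 ≤ n) (D : Set (E n))
    (hD : IsOpen D) (hDc : IsConnected D) (hDp : D ≠ univ)
    (x y : E n) (hx : x ∈ D) (hy : y ∈ D)
    (hxy : dist x y < infDist x (frontier D)) :
    innerCassinian D x y ≤
      ENNReal.ofReal (dist x y /
        (infDist x (frontier D) * (infDist x (frontier D) - dist x y))) := by
  set δ := infDist x (frontier D) with hδdef
  set d := dist x y with hddef
  have hd0 : 0 ≤ d := dist_nonneg
  have hδpos : 0 < δ := lt_of_le_of_lt hd0 hxy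
  have hδd : 0 < δ - d := by linarith
  set g : ℝ → E n := fun t => x + t • (y - x) with hgdef
  have hg0 : g 0 = x := by simp [hgdef]
  have hg1 : g 1 = y := by simp [hgdef]
  have hgc : Continuous g := by fun_prop
  have hdistx : ∀ t : ℝ, dist x (g t) = |t| * d := by
    intro t
    have h1 : x - (x + t • (y - x)) = (-t) • (y - x) := by
      rw [neg_smul]; abel
    rw [hddef, dist_eq_norm, dist_eq_norm, hgdef]
    simp only
    rw [h1, norm_smul, Real.norm_eq_abs, abs_neg, norm_sub_rev]
  have hdistg : ∀ s t : ℝ, dist (g s) (g t) = |t - s| * d := by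
    intro s t
    have h1 : (x + s • (y - x)) - (x + t • (y - x)) = (s - t) • (y - x) := by
      rw [sub_smul]; abel
    rw [hddef, dist_eq_norm, dist_eq_norm, hgdef]
    simp only
    rw [h1, norm_smul, Real.norm_eq_abs, abs_sub_comm, norm_sub_rev]
  have himg : g '' Icc 0 1 ⊆ D := by
    rintro _ ⟨t, ⟨ht0, ht1⟩, rfl⟩
    apply ball_infDist_frontier_subset hD hx
    rw [mem_ball, dist_comm, ← hδdef, hdistx t, abs_of_nonneg ht0]
    nlinarith
  have hinf : ∀ t ∈ Icc (0:ℝ) 1, δ - t * d ≤ infDist (g t) (frontier D) := by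
    rintro t ⟨ht0, ht1⟩
    have h := infDist_le_infDist_add_dist (x := x) (y := g t) (s := frontier D)
    rw [hdistx t, abs_of_nonneg ht0, ← hδdef] at h
    linarith
  have hpos : ∀ t ∈ Icc (0:ℝ) 1, 0 < δ - t * d := by
    rintro t ⟨ht0, ht1⟩; nlinarith
  set F : ℝ → ℝ := fun t => (δ - t * d)⁻¹ with hF
  have hFmono : ∀ s t, s ∈ Icc (0:ℝ) 1 → t ∈ Icc (0:ℝ) 1 → s ≤ t → F s ≤ F t := by
    intro s t hs ht hst
    have hsd : s * d ≤ t * d := mul_le_mul_of_nonneg_right hst hd0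
    exact inv_anti₀ (hpos t ht) (by linarith)
  have key : ∀ s t, s ∈ Icc (0:ℝ) 1 → t ∈ Icc (0:ℝ) 1 → s ≤ t →
      cassinian D (g s) (g t) ≤ F t - F s := by
    intro s t hs ht hst
    have h1 := hinf s hs
    have h2 := hinf t ht
    have hps := hpos s hs
    have hpt := hpos t ht
    have hc := cassinian_le (lt_of_lt_of_le hps h1) (lt_of_lt_of_le hpt h2)
    refine hc.trans ?_
    have hfe : F t - F s = dist (g s) (g t) / ((δ - s*d) * (δ - t*d)) := by
      rw [hdistg s t, abs_of_nonneg (by linarith)]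
      simp only [hF]
      rw [inv_sub_inv hpt.ne' hps.ne']
      ring
    rw [hfe]
    exact div_le_div_of_nonneg_left dist_nonneg (mul_pos hps hpt)
      (mul_le_mul h1 h2 hpt.le (le_trans hps.le h1))
  have hlen : cassinianLength D g ≤ ENNReal.ofReal (F 1 - F 0) := by
    rw [cassinianLength]
    apply iSup_le
    rintro ⟨N, u, humono, humem⟩
    simp only
    have tele : ∀ m : ℕ, ∑ i ∈ Finset.range m,
        ENNReal.ofReal (cassinian D (g (u i)) (g (u (i+1)))) ≤
        ENNReal.ofReal (F (u m) - F (u 0)) := by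
      intro m
      induction m with
      | zero => simp
      | succ k ih =>
        rw [Finset.sum_range_succ]
        have h1 : ENNReal.ofReal (cassinian D (g (u k)) (g (u (k+1)))) ≤
            ENNReal.ofReal (F (u (k+1)) - F (u k)) :=
          ENNReal.ofReal_le_ofReal
            (key _ _ (humem k) (humem (k+1)) (humono (Nat.le_succ k)))
        have hn1 : 0 ≤ F (u k) - F (u 0) := by
          have := hFmono (u 0) (u k) (humem 0) (humem k) (humono (Nat.zero_le k))
          linarith
        have hn2 : 0 ≤ F (u (k+1)) - F (u k) := by
          have := hFmono (u k) (u (k+1)) (humem k) (humem (k+1)) (humono (Nat.le_succ k))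
          linarith
        calc ∑ i ∈ Finset.range k,
            ENNReal.ofReal (cassinian D (g (u i)) (g (u (i+1)))) +
              ENNReal.ofReal (cassinian D (g (u k)) (g (u (k+1))))
            ≤ ENNReal.ofReal (F (u k) - F (u 0)) +
              ENNReal.ofReal (F (u (k+1)) - F (u k)) := add_le_add ih h1
          _ = ENNReal.ofReal (F (u (k+1)) - F (u 0)) := by
              rw [← ENNReal.ofReal_add hn1 hn2]; ring_nf
    refine (tele N).trans (ENNReal.ofReal_le_ofReal ?_)
    have hmem1 : (1:ℝ) ∈ Icc (0:ℝ) 1 := by norm_num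
    have hmem0 : (0:ℝ) ∈ Icc (0:ℝ) 1 := by norm_num
    have hA := hFmono (u N) 1 (humem N) hmem1 (humem N).2
    have hB := hFmono 0 (u 0) hmem0 (humem 0) (humem 0).1
    linarith
  have hfinal : F 1 - F 0 = d / (δ * (δ - d)) := by
    simp only [hF, one_mul, zero_mul, sub_zero]
    field_simp
    ring
  have hle := iInf_le (ι := {g : ℝ → E n // ContinuousOn g (Icc (0:ℝ) 1) ∧ g 0 = x ∧ g 1 = y ∧
      g '' Icc (0:ℝ) 1 ⊆ D}) (fun g => cassinianLength D g.1)
      ⟨g, hgc.continuousOn, hg0, hg1, himg⟩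
  rw [innerCassinian]
  exact hle.trans (hlen.trans (le_of_eq (congrArg ENNReal.ofReal hfinal)))
end

section
/- For all x, y in the unit ball B^n, tan(v(x,y)/2) ≤ c(x,y), where v is the visual angle metric and c the Cassinian metric of B^n. -/
open Metric Set

/-- The visual angle metric: the supremum of the angles subtended by `x, y`
at boundary points of `D`. -/
noncomputable def visualAngle {n : ℕ} (D : Set (E n)) (x y : E n) : ℝ :=
  ⨆ z : frontier D, EuclideanGeometry.angle x (z : E n) y

set_option maxHeartbeats 1600000
section AuxProof
open Real


/-- Concave quadratic in `t` is nonneg on an interval if nonneg at endpoints. -/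
lemma myConcaveAux (t t0 t1 C e : ℝ) (h0 : t0 ≤ t) (h1 : t ≤ t1)
    (g0 : 0 ≤ -2*t0^2 + C*t0 + e) (g1 : 0 ≤ -2*t1^2 + C*t1 + e) :
    0 ≤ -2*t^2 + C*t + e := by
  rcases eq_or_lt_of_le h0 with rfl | h0'
  · exact g0
  · have h01 : 0 < t1 - t0 := by linarith
    nlinarith [mul_nonneg (sub_nonneg.2 h1) g0, mul_nonneg (sub_nonneg.2 h0) g1,
      mul_nonneg (mul_nonneg (sub_nonneg.2 h0) (sub_nonneg.2 h1)) h01.le]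

lemma myAlg (a b d t α β R S : ℝ) (ha : 0 < a) (hb : 0 < b)
    (hR : 0 ≤ R) (hS : 0 ≤ S) (hR2 : R^2 = a^2 - α^2) (hS2 : S^2 = b^2 - β^2)
    (hα : 2*α + a^2 ≤ 0) (hβ : 2*β + b^2 ≤ 0)
    (ht1 : t ≤ a*b) (ht0 : α*β - R*S ≤ t)
    (hd : d^2 = a^2 + b^2 - 2*t) :
    a^2*b^2*(a*b - t) ≤ d^2*(a*b + t) := by
  set t0 : ℝ := α*β - R*S with ht0def
  have hab : 0 < a*b := mul_pos ha hb
  have hsq : (α*β + R*S)^2 ≤ (a*b)^2 := by nlinarith [sq_nonneg (α*S - β*R)]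
  have hCS : α*β + R*S ≤ a*b := by nlinarith [hsq, hab]
  have hα' : (0:ℝ) ≤ -α - a^2/2 := by linarith
  have hβ' : (0:ℝ) ≤ -β - b^2/2 := by linarith
  have hαβ : a^2*b^2 ≤ 4*(α*β) := by nlinarith [mul_nonneg hα' hβ']
  have h3 : a^2*b^2 ≤ 2*(a*b + t0) := by rw [ht0def]; nlinarith
  have hP : 0 ≤ a*b + t0 := by nlinarith
  have hM : 0 ≤ a*b - t0 := by linarith
  have hg0 : 0 ≤ (a^2+b^2-2*t0)*(a*b+t0) - a^2*b^2*(a*b-t0) := by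
    nlinarith [mul_nonneg hP (sq_nonneg (a-b)),
      mul_nonneg hM (by linarith : (0:ℝ) ≤ 2*(a*b+t0) - a^2*b^2)]
  have key := myConcaveAux t t0 (a*b)
      (a^2+b^2 - 2*(a*b) + a^2*b^2) ((a^2+b^2)*(a*b) - a^2*b^2*(a*b)) ht0 ht1
      (by nlinarith) (by nlinarith [mul_nonneg hab.le (sq_nonneg (a-b))])
  nlinarith [key]

lemma myVec {n : ℕ} (z u v : E n) (hz : ‖z‖ = 1) (hune : u ≠ 0) (hvne : v ≠ 0)
    (hu : 2*(inner ℝ z u : ℝ) + ‖u‖^2 ≤ 0) (hv : 2*(inner ℝ z v : ℝ) + ‖v‖^2 ≤ 0) :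
    ‖u‖^2*‖v‖^2*(‖u‖*‖v‖ - (inner ℝ u v : ℝ)) ≤
      ‖u - v‖^2*(‖u‖*‖v‖ + (inner ℝ u v : ℝ)) := by
  have ha : (0:ℝ) < ‖u‖ := norm_pos_iff.2 hune
  have hb : (0:ℝ) < ‖v‖ := norm_pos_iff.2 hvne
  refine myAlg ‖u‖ ‖v‖ ‖u - v‖ (inner ℝ u v) (inner ℝ z u) (inner ℝ z v)
    ‖u - (inner ℝ z u : ℝ) • z‖ ‖v - (inner ℝ z v : ℝ) • z‖ ha hb
    (norm_nonneg _) (norm_nonneg _) ?_ ?_ hu hv (real_inner_le_norm u v) ?_ ?_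
  · rw [norm_sub_sq_real, real_inner_smul_right, norm_smul, hz, ← real_inner_comm z u]
    simp only [Real.norm_eq_abs, mul_one, sq_abs]
    ring
  · rw [norm_sub_sq_real, real_inner_smul_right, norm_smul, hz, ← real_inner_comm z v]
    simp only [Real.norm_eq_abs, mul_one, sq_abs]
    ring
  · have h1 : (inner ℝ (u - (inner ℝ z u : ℝ) • z) (v - (inner ℝ z v : ℝ) • z) : ℝ)
        = (inner ℝ u v : ℝ) - (inner ℝ z u : ℝ)*(inner ℝ z v : ℝ) := by
      rw [inner_sub_left, inner_sub_right, inner_sub_right, real_inner_smul_left,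
        real_inner_smul_left, real_inner_smul_right, real_inner_smul_right,
        real_inner_self_eq_norm_sq, hz, ← real_inner_comm z u]
      ring
    have h2 := abs_real_inner_le_norm (u - (inner ℝ z u : ℝ) • z) (v - (inner ℝ z v : ℝ) • z)
    rw [h1] at h2
    linarith [(abs_le.1 h2).1]
  · rw [norm_sub_sq_real]; ring

lemma myScalar (a b d t : ℝ) (ha : 0 < a) (hb : 0 < b) (hd0 : 0 ≤ d)
    (htle : t ≤ a*b) (htge : -(a*b) ≤ t)
    (key : a^2*b^2*(a*b - t) ≤ d^2*(a*b + t)) :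
    Real.arccos (t/(a*b)) < π ∧ Real.tan (Real.arccos (t/(a*b)) / 2) ≤ d/(a*b) := by
  have hab : 0 < a*b := mul_pos ha hb
  set s : ℝ := t/(a*b) with hsdef
  have hs1 : s ≤ 1 := (div_le_one hab).2 htle
  have hsm : -1 ≤ s := (le_div_iff₀ hab).2 (by linarith)
  have hPt : 0 < a*b + t := by
    by_contra h
    push_neg at h
    nlinarith [key, sq_nonneg d, mul_pos hab hab]
  have h1s : 0 < 1 + s := by
    have e : 1 + s = (a*b+t)/(a*b) := by rw [hsdef]; field_simp
    rw [e]; exact div_pos hPt hab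
  have h1m : 0 ≤ 1 - s := by linarith
  have hθπ : Real.arccos s < π :=
    lt_of_le_of_ne (Real.arccos_le_pi s) (fun h => by
      rw [Real.arccos_eq_pi] at h; linarith)
  refine ⟨hθπ, ?_⟩
  have hcos : Real.cos (Real.arccos s) = s := Real.cos_arccos hsm hs1
  have hsin : Real.sin (Real.arccos s / 2) = Real.sqrt ((1 - s)/2) := by
    rw [Real.sin_half_eq_sqrt (Real.arccos_nonneg s)
      (le_trans (Real.arccos_le_pi s) (by linarith [Real.pi_pos])), hcos]
  have hcosh : Real.cos (Real.arccos s / 2) = Real.sqrt ((1 + s)/2) := by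
    rw [Real.cos_half (by linarith [Real.arccos_nonneg s, Real.pi_pos]) (Real.arccos_le_pi s), hcos]
  have htan : Real.tan (Real.arccos s / 2) = Real.sqrt (1-s) / Real.sqrt (1+s) := by
    rw [Real.tan_eq_sin_div_cos, hsin, hcosh, Real.sqrt_div h1m, Real.sqrt_div h1s.le]
    have h2 : Real.sqrt 2 ≠ 0 := by positivity
    have h3 : Real.sqrt (1+s) ≠ 0 := by positivity
    field_simp
  rw [htan, div_le_div_iff₀ (Real.sqrt_pos.2 h1s) hab]
  have hsq : (1-s)*(a*b)^2 ≤ d^2*(1+s) := by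
    apply le_of_mul_le_mul_right _ hab
    have e1 : (1-s)*(a*b)^2*(a*b) = a^2*b^2*(a*b - t) := by
      rw [hsdef]; field_simp
    have e2 : d^2*(1+s)*(a*b) = d^2*(a*b + t) := by
      rw [hsdef]; field_simp
    rw [e1, e2]; exact key
  calc Real.sqrt (1-s) * (a*b) = Real.sqrt ((1-s)*(a*b)^2) := by
        rw [Real.sqrt_mul h1m, Real.sqrt_sq hab.le]
    _ ≤ Real.sqrt (d^2*(1+s)) := Real.sqrt_le_sqrt hsq
    _ = d * Real.sqrt (1+s) := by rw [Real.sqrt_mul (sq_nonneg d), Real.sqrt_sq hd0]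

lemma myPointwise {n : ℕ} (x y z : E n) (hx : ‖x‖ < 1) (hy : ‖y‖ < 1) (hz : ‖z‖ = 1) :
    EuclideanGeometry.angle x z y < π ∧
      Real.tan (EuclideanGeometry.angle x z y / 2) ≤ dist x y / (dist x z * dist z y) := by
  have hune : x - z ≠ 0 := sub_ne_zero.2 (by rintro rfl; exact absurd hz hx.ne)
  have hvne : y - z ≠ 0 := sub_ne_zero.2 (by rintro rfl; exact absurd hz hy.ne)
  have hn1 : 2*(inner ℝ z (x-z) : ℝ) + ‖x-z‖^2 ≤ 0 := by
    have e : ‖z + (x - z)‖^2 = ‖z‖^2 + 2*(inner ℝ z (x-z) : ℝ) + ‖x-z‖^2 := norm_add_sq_real _ _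
    have e2 : z + (x - z) = x := by abel
    rw [e2, hz] at e
    nlinarith [norm_nonneg x, hx]
  have hn2 : 2*(inner ℝ z (y-z) : ℝ) + ‖y-z‖^2 ≤ 0 := by
    have e : ‖z + (y - z)‖^2 = ‖z‖^2 + 2*(inner ℝ z (y-z) : ℝ) + ‖y-z‖^2 := norm_add_sq_real _ _
    have e2 : z + (y - z) = y := by abel
    rw [e2, hz] at e
    nlinarith [norm_nonneg y, hy]
  have key := myVec z (x-z) (y-z) hz hune hvne hn1 hn2
  have hdiff : (x - z) - (y - z) = x - y := by abel
  rw [hdiff] at key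
  have ha : (0:ℝ) < ‖x-z‖ := norm_pos_iff.2 hune
  have hb : (0:ℝ) < ‖y-z‖ := norm_pos_iff.2 hvne
  have hsc := myScalar ‖x-z‖ ‖y-z‖ ‖x-y‖ (inner ℝ (x-z) (y-z)) ha hb (norm_nonneg _)
    (real_inner_le_norm _ _) (neg_le_of_abs_le (abs_real_inner_le_norm _ _)) key
  have hangle : EuclideanGeometry.angle x z y
      = Real.arccos ((inner ℝ (x-z) (y-z) : ℝ) / (‖x-z‖ * ‖y-z‖)) := rfl
  have hdist1 : dist x z = ‖x-z‖ := dist_eq_norm x z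
  have hdist2 : dist z y = ‖y-z‖ := by rw [dist_comm]; exact dist_eq_norm y z
  have hdist3 : dist x y = ‖x-y‖ := dist_eq_norm x y
  rw [hangle, hdist1, hdist2, hdist3]
  exact hsc


theorem tan_visualAngle_le_cassinian (n : ℕ) (hn : 2 ≤ n) (x y : E n)
    (hx : x ∈ ball (0 : E n) 1) (hy : y ∈ ball (0 : E n) 1) :
    Real.tan (visualAngle (ball (0 : E n) 1) x y / 2) ≤
      cassinian (ball (0 : E n) 1) x y := by
  have hxn : ‖x‖ < 1 := mem_ball_zero_iff.1 hx
  have hyn : ‖y‖ < 1 := mem_ball_zero_iff.1 hy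
  have hfr : frontier (ball (0:E n) 1) = sphere (0:E n) 1 := frontier_ball 0 one_ne_zero
  have hsphere : ∀ p : frontier (ball (0:E n) 1), ‖(p : E n)‖ = 1 := by
    intro p
    exact mem_sphere_zero_iff_norm.1 ((Set.ext_iff.1 hfr _).1 p.2)
  haveI hne : Nonempty (frontier (ball (0:E n) 1)) := by
    refine ⟨⟨EuclideanSpace.single (⟨0, by omega⟩ : Fin n) (1:ℝ), ?_⟩⟩
    rw [hfr, mem_sphere_zero_iff_norm, EuclideanSpace.norm_single]
    simp
  -- boundedness of the cassinian quotients
  have hxb : ∀ p : frontier (ball (0:E n) 1), 1 - ‖x‖ ≤ dist x (p : E n) := by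
    intro p
    have h := norm_sub_norm_le ((p : E n)) x
    rw [hsphere p] at h
    rw [dist_eq_norm, norm_sub_rev]
    linarith
  have hyb : ∀ p : frontier (ball (0:E n) 1), 1 - ‖y‖ ≤ dist (p : E n) y := by
    intro p
    have h := norm_sub_norm_le ((p : E n)) y
    rw [hsphere p] at h
    rw [dist_eq_norm]
    linarith
  have hxpos : (0:ℝ) < 1 - ‖x‖ := by linarith
  have hypos : (0:ℝ) < 1 - ‖y‖ := by linarith
  have hbdc : BddAbove (Set.range fun p : frontier (ball (0:E n) 1) =>
      dist x y / (dist x (p : E n) * dist (p : E n) y)) := by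
    refine ⟨dist x y / ((1 - ‖x‖) * (1 - ‖y‖)), ?_⟩
    rintro r ⟨p, rfl⟩
    exact div_le_div_of_nonneg_left dist_nonneg (mul_pos hxpos hypos)
      (mul_le_mul (hxb p) (hyb p) hypos.le (by linarith [hxb p, (dist_nonneg : 0 ≤ dist x (p:E n))]))
  have hc0 : 0 ≤ cassinian (ball (0:E n) 1) x y := by
    obtain ⟨p⟩ := hne
    refine le_trans ?_ (le_ciSup hbdc p)
    positivity
  have hbda : BddAbove (Set.range fun z : frontier (ball (0:E n) 1) =>
      EuclideanGeometry.angle x (z : E n) y) :=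
    ⟨π, by rintro r ⟨z, rfl⟩; exact EuclideanGeometry.angle_le_pi _ _ _⟩
  have hv0 : 0 ≤ visualAngle (ball (0:E n) 1) x y := by
    obtain ⟨p⟩ := hne
    exact le_trans (EuclideanGeometry.angle_nonneg x (p : E n) y) (le_ciSup hbda p)
  have hvpi : visualAngle (ball (0:E n) 1) x y ≤ π :=
    ciSup_le fun z => EuclideanGeometry.angle_le_pi _ _ _
  rcases lt_or_ge (visualAngle (ball (0:E n) 1) x y) π with hvlt | hvge
  · -- main case
    set c := cassinian (ball (0:E n) 1) x y with hc
    have hptw : ∀ p : frontier (ball (0:E n) 1),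
        EuclideanGeometry.angle x (p : E n) y ≤ 2 * Real.arctan c := by
      intro p
      obtain ⟨hlt, htan⟩ := myPointwise x y (p : E n) hxn hyn (hsphere p)
      have h1 : Real.tan (EuclideanGeometry.angle x (p : E n) y / 2) ≤ c :=
        htan.trans (le_ciSup hbdc p)
      have h2 : EuclideanGeometry.angle x (p : E n) y / 2
          = Real.arctan (Real.tan (EuclideanGeometry.angle x (p : E n) y / 2)) := by
        rw [Real.arctan_tan (by linarith [EuclideanGeometry.angle_nonneg x (p:E n) y, Real.pi_pos])
          (by linarith)]
      have h3 : EuclideanGeometry.angle x (p : E n) y / 2 ≤ Real.arctan c := by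
        rw [h2]; exact Real.arctan_strictMono.monotone h1
      linarith
    have hvle : visualAngle (ball (0:E n) 1) x y ≤ 2 * Real.arctan c := ciSup_le hptw
    have hmem1 : visualAngle (ball (0:E n) 1) x y / 2 ∈ Set.Ioo (-(π/2)) (π/2) :=
      ⟨by linarith [Real.pi_pos], by linarith⟩
    have hmem2 : Real.arctan c ∈ Set.Ioo (-(π/2)) (π/2) :=
      ⟨Real.neg_pi_div_two_lt_arctan c, Real.arctan_lt_pi_div_two c⟩
    have := Real.strictMonoOn_tan.monotoneOn hmem1 hmem2 (by linarith)
    rwa [Real.tan_arctan] at this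
  · have hveq : visualAngle (ball (0:E n) 1) x y = π := le_antisymm hvpi hvge
    rw [hveq, Real.tan_pi_div_two]
    exact hc0

end AuxProof
end

section
/- For all x, y in the unit disk B² with max(|x|,|y|) ≤ λ < 1, c(x,y) ≤ (2(3+λ²))/(3(1-λ²)(1-λ)²) · v(x,y), where c is the Cassinian metric and v the visual angle metric of B². -/
open Metric Set

/-- There is a point on the unit sphere equidistant from two distinct points of the disk. -/
lemma exists_equidistant_sphere (x y : E 2) (hx : ‖x‖ < 1) (hy : ‖y‖ < 1) (hne : x ≠ y) :
    ∃ z : E 2, ‖z‖ = 1 ∧ dist x z = dist y z := by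
  have hvne : x - y ≠ 0 := sub_ne_zero.mpr hne
  obtain ⟨u, hune, hinner⟩ : ∃ u : E 2, u ≠ 0 ∧ (inner ℝ (x - y) u : ℝ) = 0 := by
    refine ⟨EuclideanSpace.single 0 (-((x - y) 1)) + EuclideanSpace.single 1 ((x - y) 0),
      ?_, ?_⟩
    · intro h
      apply hvne
      have h0 := congrArg (fun v : E 2 => v 0) h
      have h1 := congrArg (fun v : E 2 => v 1) h
      simp [EuclideanSpace.single_apply] at h0 h1
      ext i
      fin_cases i <;> simp <;> linarith
    · rw [real_inner_comm, inner_add_left, EuclideanSpace.inner_single_left,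
        EuclideanSpace.inner_single_left]
      simp
      ring
  have hun : (0:ℝ) < ‖u‖ := norm_pos_iff.mpr hune
  obtain ⟨m, hm⟩ : ∃ m : E 2, m = (1/2 : ℝ) • (x + y) := ⟨_, rfl⟩
  have hmn : ‖m‖ < 1 := by
    have h1 : ‖m‖ ≤ (1/2) * (‖x‖ + ‖y‖) := by
      rw [hm, norm_smul, Real.norm_eq_abs, abs_of_pos (by norm_num : (0:ℝ) < 1/2)]
      exact mul_le_mul_of_nonneg_left (norm_add_le x y) (by norm_num)
    linarith
  -- IVT to find t with ‖m + t • u‖ = 1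
  obtain ⟨t, _, ht⟩ : ∃ t ∈ Icc (0:ℝ) (2/‖u‖), ‖m + t • u‖ = 1 := by
    have hcont : ContinuousOn (fun t : ℝ => ‖m + t • u‖) (Icc 0 (2/‖u‖)) := by
      fun_prop
    have hT : (0:ℝ) ≤ 2/‖u‖ := by positivity
    have h0 : ‖m + (0:ℝ) • u‖ = ‖m‖ := by rw [zero_smul, add_zero]
    have hTv : (1:ℝ) ≤ ‖m + (2/‖u‖) • u‖ := by
      have h1 : ‖(2/‖u‖) • u‖ = 2 := by
        rw [norm_smul, Real.norm_eq_abs, abs_of_nonneg (by positivity),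
          div_mul_cancel₀ _ (ne_of_gt hun)]
      have h2 := norm_sub_norm_le ((2/‖u‖) • u) (-m)
      rw [sub_neg_eq_add, norm_neg] at h2
      rw [add_comm m]
      linarith
    have hmem : (1:ℝ) ∈ Icc ‖m + (0:ℝ) • u‖ ‖m + (2/‖u‖) • u‖ := ⟨by rw [h0]; exact hmn.le, hTv⟩
    obtain ⟨t, htI, htv⟩ := intermediate_value_Icc hT hcont hmem
    exact ⟨t, htI, htv⟩
  refine ⟨m + t • u, ht, ?_⟩
  have hxm : x - (m + t • u) = (1/2 : ℝ) • (x - y) - t • u := by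
    rw [hm]; module
  have hym : y - (m + t • u) = -((1/2 : ℝ) • (x - y)) - t • u := by
    rw [hm]; module
  have hi : (inner ℝ ((1/2 : ℝ) • (x - y)) (t • u) : ℝ) = 0 := by
    have h' : (x 0 - y 0) * u 0 + (x 1 - y 1) * u 1 = 0 := by
      simpa [PiLp.inner_apply, RCLike.inner_apply, Fin.sum_univ_two, PiLp.sub_apply, mul_comm]
        using hinner
    simp [PiLp.inner_apply, RCLike.inner_apply, Fin.sum_univ_two, PiLp.sub_apply,
      PiLp.smul_apply, smul_eq_mul]
    linear_combination (t/2) * h'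
  have hsq : dist x (m + t • u) ^ 2 = dist y (m + t • u) ^ 2 := by
    have hneg : -((1/2 : ℝ) • (x - y)) - t • u = -((1/2 : ℝ) • (x - y) + t • u) := by
      module
    rw [dist_eq_norm, dist_eq_norm, hxm, hym, hneg, norm_neg,
      norm_sub_sq_real, norm_add_sq_real]
    linarith [hi]
  have h1 : dist x (m + t • u) = Real.sqrt (dist x (m + t • u) ^ 2) :=
    (Real.sqrt_sq dist_nonneg).symm
  have h2 : dist y (m + t • u) = Real.sqrt (dist y (m + t • u) ^ 2) :=
    (Real.sqrt_sq dist_nonneg).symm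
  rw [h1, h2, hsq]

theorem cassinian_le_visualAngle (lam : ℝ) (hlam : lam < 1) (x y : E 2)
    (hx : x ∈ ball (0 : E 2) 1) (hy : y ∈ ball (0 : E 2) 1)
    (hxy : max ‖x‖ ‖y‖ ≤ lam) :
    cassinian (ball (0 : E 2) 1) x y ≤
      2 * (3 + lam ^ 2) / (3 * (1 - lam ^ 2) * (1 - lam) ^ 2) *
        visualAngle (ball (0 : E 2) 1) x y := by
  have hxn : ‖x‖ ≤ lam := le_trans (le_max_left _ _) hxy
  have hyn : ‖y‖ ≤ lam := le_trans (le_max_right _ _) hxy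
  have hlam0 : (0:ℝ) ≤ lam := le_trans (norm_nonneg x) hxn
  have hpos : (0:ℝ) < 1 - lam := by linarith
  have hpos2 : (0:ℝ) < 1 - lam ^ 2 := by nlinarith
  have hfr : frontier (ball (0 : E 2) 1) = sphere (0 : E 2) 1 :=
    frontier_ball (0 : E 2) one_ne_zero
  haveI hne : Nonempty ↥(frontier (ball (0 : E 2) 1)) := by
    refine ⟨⟨EuclideanSpace.single 0 1, ?_⟩⟩
    rw [hfr, mem_sphere_zero_iff_norm, EuclideanSpace.norm_single]
    norm_num
  have hbdd : BddAbove (Set.range fun z : ↥(frontier (ball (0 : E 2) 1)) =>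
      EuclideanGeometry.angle x (z : E 2) y) := by
    refine ⟨Real.pi, ?_⟩
    rintro a ⟨z, rfl⟩
    exact EuclideanGeometry.angle_le_pi x _ y
  have hV0 : 0 ≤ visualAngle (ball (0 : E 2) 1) x y := by
    obtain ⟨z⟩ := hne
    refine le_trans (EuclideanGeometry.angle_nonneg x (z : E 2) y) ?_
    exact le_ciSup hbdd z
  -- Step 1: bound the Cassinian metric
  have hcas : cassinian (ball (0 : E 2) 1) x y ≤ dist x y / ((1 - lam) * (1 - lam)) := by
    refine ciSup_le fun p => ?_
    have hp : ‖(p : E 2)‖ = 1 :=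
      mem_sphere_zero_iff_norm.mp (frontier_ball_subset_sphere p.2)
    have hdx : 1 - lam ≤ dist x (p : E 2) := by
      have := norm_sub_norm_le (p : E 2) x
      rw [dist_comm, dist_eq_norm]
      rw [hp] at this
      linarith
    have hdy : 1 - lam ≤ dist (p : E 2) y := by
      have := norm_sub_norm_le (p : E 2) y
      rw [dist_eq_norm]
      rw [hp] at this
      linarith
    gcongr
  -- Step 2: bound dist x y by the visual angle
  have hd : dist x y ≤ 2 * visualAngle (ball (0 : E 2) 1) x y := by
    rcases eq_or_ne x y with rfl | hxyne
    · simp [hV0]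
    · rw [mem_ball, dist_zero_right] at hx hy
      obtain ⟨z, hz1, hzeq⟩ := exists_equidistant_sphere x y hx hy hxyne
      set θ := EuclideanGeometry.angle x z y with hθ
      have hθ0 : 0 ≤ θ := EuclideanGeometry.angle_nonneg _ _ _
      have hzf : z ∈ frontier (ball (0 : E 2) 1) := by
        rw [hfr, mem_sphere_zero_iff_norm]; exact hz1
      have hθV : θ ≤ visualAngle (ball (0 : E 2) 1) x y := le_ciSup hbdd ⟨z, hzf⟩
      have hlc := EuclideanGeometry.law_cos (V := E 2) (P := E 2) x z y
      rw [← hzeq, ← hθ] at hlc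
      have ha2 : dist x z ≤ 2 := by
        rw [dist_eq_norm]
        calc ‖x - z‖ ≤ ‖x‖ + ‖z‖ := norm_sub_le x z
          _ ≤ 2 := by rw [hz1]; linarith
      have hcosb : 1 - θ ^ 2 / 2 ≤ Real.cos θ := Real.one_sub_sq_div_two_le_cos
      have hda : dist x y ^ 2 ≤ dist x z ^ 2 * θ ^ 2 := by
        nlinarith [sq_nonneg (dist x z), dist_nonneg (x := x) (y := z)]
      have ha4 : dist x z ^ 2 ≤ 4 := by
        nlinarith [dist_nonneg (x := x) (y := z)]
      have hd2 : dist x y ^ 2 ≤ (2 * θ) ^ 2 := by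
        nlinarith [mul_le_mul_of_nonneg_right ha4 (sq_nonneg θ)]
      have hfin := Real.sqrt_le_sqrt hd2
      rw [Real.sqrt_sq dist_nonneg, Real.sqrt_sq (by positivity)] at hfin
      linarith
      
  -- Step 3: combine
  calc cassinian (ball (0 : E 2) 1) x y
      ≤ dist x y / ((1 - lam) * (1 - lam)) := hcas
    _ ≤ (2 * visualAngle (ball (0 : E 2) 1) x y) / ((1 - lam) * (1 - lam)) := by
        gcongr
    _ = (2 / ((1 - lam) * (1 - lam))) * visualAngle (ball (0 : E 2) 1) x y := by ring
    _ ≤ 2 * (3 + lam ^ 2) / (3 * (1 - lam ^ 2) * (1 - lam) ^ 2) *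
        visualAngle (ball (0 : E 2) 1) x y := by
        apply mul_le_mul_of_nonneg_right _ hV0
        rw [div_le_div_iff₀ (by positivity) (by positivity)]
        nlinarith [sq_nonneg lam, sq_nonneg (1 - lam), mul_pos hpos hpos, sq_nonneg (lam*(1-lam))]
end

section
/- In the unit ball B^n, c(0,x) = |x|/(1-|x|) for all x ∈ B^n, and more generally c(r e₁, s e₁) = (s-r)/((1-r)(1-s)) for 0 ≤ r < s < 1. -/
open Metric Set

/-- If the distances from `x` and to `y` are both minimized at a common boundary point `p0`,
then the Cassinian metric is attained there. -/
lemma cassinian_eq {n : ℕ} (x y : E n) (hx : ‖x‖ < 1) (hy : ‖y‖ < 1)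
    (p0 : E n) (hp0 : ‖p0‖ = 1) (h1 : dist x p0 = 1 - ‖x‖) (h2 : dist p0 y = 1 - ‖y‖) :
    cassinian (ball (0 : E n) 1) x y = dist x y / ((1 - ‖x‖) * (1 - ‖y‖)) := by
  have hfr : frontier (ball (0 : E n) 1) = sphere 0 1 := frontier_ball 0 one_ne_zero
  have hp0' : p0 ∈ frontier (ball (0 : E n) 1) := by
    rw [hfr, mem_sphere_zero_iff_norm]; exact hp0
  have hxpos : (0:ℝ) < 1 - ‖x‖ := by linarith
  have hypos : (0:ℝ) < 1 - ‖y‖ := by linarith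
  set M := dist x y / ((1 - ‖x‖) * (1 - ‖y‖)) with hM
  have hbound : ∀ p : frontier (ball (0 : E n) 1),
      dist x y / (dist x (p : E n) * dist (p : E n) y) ≤ M := by
    rintro ⟨p, hp⟩
    rw [hfr, mem_sphere_zero_iff_norm] at hp
    have t1 : 1 - ‖x‖ ≤ dist x p := by
      have h := dist_triangle p x 0
      rw [dist_zero_right, dist_zero_right, dist_comm p x] at h
      linarith [hp ▸ h]
    have t2 : 1 - ‖y‖ ≤ dist p y := by
      have h := dist_triangle p y 0
      rw [dist_zero_right, dist_zero_right] at h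
      linarith [hp ▸ h]
    rw [hM]
    apply div_le_div_of_nonneg_left dist_nonneg (mul_pos hxpos hypos)
    exact mul_le_mul t1 t2 hypos.le (le_trans hxpos.le t1)
  have hne : Nonempty (frontier (ball (0 : E n) 1)) := ⟨⟨p0, hp0'⟩⟩
  have hbdd : BddAbove (Set.range fun p : frontier (ball (0 : E n) 1) =>
      dist x y / (dist x (p : E n) * dist (p : E n) y)) := by
    refine ⟨M, ?_⟩
    rintro _ ⟨p, rfl⟩
    exact hbound p
  apply le_antisymm
  · exact ciSup_le hbound
  · have h := le_ciSup hbdd (⟨p0, hp0'⟩ : frontier (ball (0 : E n) 1))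
    simpa [h1, h2, hM, cassinian] using h

theorem cassinian_ball_formulas (n : ℕ) (hn : 2 ≤ n) :
    (∀ x ∈ ball (0 : E n) 1, cassinian (ball (0 : E n) 1) (0 : E n) x = ‖x‖ / (1 - ‖x‖)) ∧
      ∀ r s : ℝ, 0 ≤ r → r < s → s < 1 →
        cassinian (ball (0 : E n) 1) (r • e1 n hn) (s • e1 n hn) =
          (s - r) / ((1 - r) * (1 - s)) := by
  constructor
  · intro x hx
    rw [mem_ball_zero_iff] at hx
    by_cases hx0 : x = 0
    · subst hx0
      have h := cassinian_eq (0 : E n) 0 (by norm_num) (by norm_num) (e1 n hn)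
        (norm_e1 n hn) (by simp [norm_e1 n hn]) (by simp [norm_e1 n hn])
      simpa using h
    · have hxn : (0:ℝ) < ‖x‖ := norm_pos_iff.mpr hx0
      set p0 : E n := ‖x‖⁻¹ • x with hp0def
      have hp0 : ‖p0‖ = 1 := by
        rw [hp0def, norm_smul, norm_inv, norm_norm]
        field_simp
      have h1 : dist (0 : E n) p0 = 1 - ‖(0 : E n)‖ := by
        simp [hp0]
      have h2 : dist p0 x = 1 - ‖x‖ := by
        have : p0 - x = (‖x‖⁻¹ - 1) • x := by
          rw [sub_smul, one_smul, hp0def]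
        have hinv : 1 ≤ ‖x‖⁻¹ := one_le_inv_iff₀.mpr ⟨hxn, hx.le⟩
        rw [dist_eq_norm, this, norm_smul, Real.norm_eq_abs,
          abs_of_nonneg (by linarith)]
        field_simp
      have h := cassinian_eq (0 : E n) x (by norm_num) hx p0 hp0 h1 h2
      simpa using h
  · intro r s hr hrs hs1
    have he := norm_e1 n hn
    have hs0 : (0:ℝ) ≤ s := le_trans hr hrs.le
    have hnr : ‖r • e1 n hn‖ = r := by
      rw [norm_smul, he, mul_one, Real.norm_eq_abs, abs_of_nonneg hr]
    have hns : ‖s • e1 n hn‖ = s := by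
      rw [norm_smul, he, mul_one, Real.norm_eq_abs, abs_of_nonneg hs0]
    have h1 : dist (r • e1 n hn) (e1 n hn) = 1 - ‖r • e1 n hn‖ := by
      rw [hnr, dist_eq_norm]
      have : r • e1 n hn - e1 n hn = (r - 1) • e1 n hn := by rw [sub_smul, one_smul]
      rw [this, norm_smul, he, mul_one, Real.norm_eq_abs, abs_of_nonpos (by linarith)]
      ring
    have h2 : dist (e1 n hn) (s • e1 n hn) = 1 - ‖s • e1 n hn‖ := by
      rw [hns, dist_eq_norm]
      have : e1 n hn - s • e1 n hn = (1 - s) • e1 n hn := by rw [sub_smul, one_smul]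
      rw [this, norm_smul, he, mul_one, Real.norm_eq_abs, abs_of_nonneg (by linarith)]
    have hd : dist (r • e1 n hn) (s • e1 n hn) = s - r := by
      rw [dist_eq_norm]
      have : r • e1 n hn - s • e1 n hn = (r - s) • e1 n hn := by rw [sub_smul]
      rw [this, norm_smul, he, mul_one, Real.norm_eq_abs, abs_of_nonpos (by linarith)]
      ring
    have h := cassinian_eq (r • e1 n hn) (s • e1 n hn)
      (by rw [hnr]; linarith) (by rw [hns]; linarith) (e1 n hn) he h1 h2
    rw [h, hd, hnr, hns]
end
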